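/- arXiv:1609.09519 — 9 statements merged into one kernel-verified Lean document; each statement's English description precedes it below -/
import Mathlib

section
/- For all integers n ≥ d ≥ 1, the set G(n,d) of good coefficient matrices is an open and dense subset of ℂ^{n×d} (with its standard topology as a finite-dimensional complex vector space). -/
open scoped BigOperators

/-- The set `G(n,d)` of *good coefficient matrices*: `C` is good if for every nonempty
set `Ψ` of permutations of `{1,…,d}` and every injection `φ : {1,…,d} ↪ {1,…,n}`,
the signed sum `∑_{π∈Ψ} sign(π) ∏_k C_{φ(k),π(k)}` is nonzero. -/
def Good {n d : ℕ} (C : Matrix (Fin n) (Fin d) ℂ) : Prop :=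
  ∀ Ψ : Finset (Equiv.Perm (Fin d)), Ψ.Nonempty → ∀ φ : Fin d ↪ Fin n,
    ∑ π ∈ Ψ, ((Equiv.Perm.sign π : ℤ) : ℂ) * ∏ k, C (φ k) (π k) ≠ 0

/-- Max-plus permanent of a rectangular real matrix (rows indexed by `κ`, columns by `ι`):
the maximum over injections `φ` of the columns into the rows of `∑ j, A (φ j) j`. -/
noncomputable def mpPerm {ι κ : Type*} [Fintype ι] [Fintype κ] (A : Matrix κ ι ℝ) : ℝ :=
  ⨆ φ : ι ↪ κ, ∑ j, A (φ j) j

/-- The `i`-obligated max-plus permanent: maximum over injections whose image contains `i`. -/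
noncomputable def mpPermOb {ι κ : Type*} [Fintype ι] [Fintype κ] (A : Matrix κ ι ℝ) (i : κ) : ℝ :=
  ⨆ φ : {φ : ι ↪ κ // ∃ j, φ j = i}, ∑ j, A (φ.1 j) j

/-- The set of optimal assignments of a max-plus matrix. -/
def oas {ι κ : Type*} [Fintype ι] [Fintype κ] (A : Matrix κ ι ℝ) : Set (ι ↪ κ) :=
  {φ | ∑ j, A (φ j) j = mpPerm A}

/-- The max-plus permanent of a square matrix with row `r` and column `c` deleted. -/
noncomputable def mpPermDel {d : ℕ} (M : Matrix (Fin d) (Fin d) ℝ) (r c : Fin d) : ℝ :=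
  mpPerm (M.submatrix (fun i : {i : Fin d // i ≠ r} => (i : Fin d))
                      (fun j : {j : Fin d // j ≠ c} => (j : Fin d)))

/-- The max-plus inverse of a square matrix:
`(M^{⊗-1})_{ij} = perm(M with row j and column i deleted) - perm(M)`. -/
noncomputable def mpInv {d : ℕ} (M : Matrix (Fin d) (Fin d) ℝ) : Matrix (Fin d) (Fin d) ℝ :=
  fun i j => mpPermDel M j i - mpPerm M

/-- Max-plus statistical leverage scores: `p_i(A) = 2 (perm(A,i) - perm(A))`. -/
noncomputable def mpScore {n d : ℕ} (A : Matrix (Fin n) (Fin d) ℝ) (i : Fin n) : ℝ :=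
  2 * (mpPermOb A i - mpPerm A)

/-- Statistical leverage scores of a complex matrix:
`p_i(A) = sup_{x, Ax ≠ 0} |(Ax)_i|² / ‖Ax‖₂²` (and `0` if the sup is over the empty set). -/
noncomputable def levScore {n d : ℕ} (A : Matrix (Fin n) (Fin d) ℂ) (i : Fin n) : ℝ :=
  sSup {t : ℝ | ∃ x : Fin d → ℂ, A.mulVec x ≠ 0 ∧
    t = ‖A.mulVec x i‖ ^ 2 / ∑ k, ‖A.mulVec x k‖ ^ 2}

section GoodAux
open MvPolynomial

lemma prodX {σ : Type*} [DecidableEq σ] {d : ℕ} (f : Fin d → σ) :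
    (∏ k, (X (f k) : MvPolynomial σ ℂ)) =
      monomial (∑ k, Finsupp.single (f k) 1) 1 := by
  induction d with
  | zero => simp [monomial_zero']
  | succ m ih =>
      rw [Fin.prod_univ_succ, Fin.sum_univ_succ, ih (fun k => f k.succ),
        X, monomial_mul, one_mul]

lemma Dinj {n d : ℕ} (φ : Fin d ↪ Fin n) {π π' : Equiv.Perm (Fin d)}
    (h : (∑ k, Finsupp.single ((φ k, π k) : Fin n × Fin d) 1) =
      ∑ k, Finsupp.single ((φ k, π' k) : Fin n × Fin d) 1) : π = π' := by
  classical
  apply Equiv.ext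
  intro k₀
  by_contra hne
  have h1 := congrFun (congrArg DFunLike.coe h) (φ k₀, π k₀)
  rw [Finsupp.finset_sum_apply, Finsupp.finset_sum_apply] at h1
  simp only [Finsupp.single_apply] at h1
  have hl : (∑ k, if ((φ k, π k) : Fin n × Fin d) = (φ k₀, π k₀) then 1 else 0) = 1 := by
    rw [Finset.sum_eq_single_of_mem k₀ (Finset.mem_univ _)]
    · simp
    · intro k _ hk
      rw [if_neg]
      intro hpe
      exact hk (φ.injective (congrArg Prod.fst hpe))
  have hr : (∑ k, if ((φ k, π' k) : Fin n × Fin d) = (φ k₀, π k₀) then 1 else 0) = 0 := by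
    apply Finset.sum_eq_zero
    intro k _
    rw [if_neg]
    intro hpe
    have hk : k = k₀ := φ.injective (congrArg Prod.fst hpe)
    subst hk
    exact hne (congrArg Prod.snd hpe).symm
  omega

/-- The multivariate polynomial encoding one good-matrix constraint. -/
noncomputable def Qpoly (n d : ℕ) (Ψ : Finset (Equiv.Perm (Fin d))) (φ : Fin d ↪ Fin n) :
    MvPolynomial (Fin n × Fin d) ℂ :=
  ∑ π ∈ Ψ, MvPolynomial.C ((Equiv.Perm.sign π : ℤ) : ℂ) * ∏ k, X ((φ k, π k) : Fin n × Fin d)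

lemma Qpoly_ne_zero {n d : ℕ} {Ψ : Finset (Equiv.Perm (Fin d))} (hΨ : Ψ.Nonempty)
    (φ : Fin d ↪ Fin n) : Qpoly n d Ψ φ ≠ 0 := by
  classical
  obtain ⟨π₀, hπ₀⟩ := hΨ
  intro h0
  have hc := congrArg (coeff (∑ k, Finsupp.single ((φ k, π₀ k) : Fin n × Fin d) 1)) h0
  rw [Qpoly, coeff_sum] at hc
  simp only [coeff_C_mul, prodX, coeff_monomial, coeff_zero, mul_ite, mul_one, mul_zero] at hc
  rw [Finset.sum_eq_single_of_mem π₀ hπ₀] at hc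
  · rw [if_pos rfl] at hc
    simp at hc
  · intro π _ hπ
    rw [if_neg]
    exact fun hD => hπ (Dinj φ hD)

lemma exists_good_matrix (n d : ℕ) :
    ∃ M : Matrix (Fin n) (Fin d) ℂ, ∀ Ψ : Finset (Equiv.Perm (Fin d)), Ψ.Nonempty →
      ∀ φ : Fin d ↪ Fin n,
        ∑ π ∈ Ψ, ((Equiv.Perm.sign π : ℤ) : ℂ) * ∏ k, M (φ k) (π k) ≠ 0 := by
  classical
  set R : MvPolynomial (Fin n × Fin d) ℂ :=
    ∏ p : Finset (Equiv.Perm (Fin d)) × (Fin d ↪ Fin n),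
      if h : p.1.Nonempty then Qpoly n d p.1 p.2 else 1 with hR
  have hRne : R ≠ 0 := by
    rw [hR]
    apply Finset.prod_ne_zero_iff.2
    intro p _
    split
    · exact Qpoly_ne_zero ‹_› _
    · exact one_ne_zero
  have hx : ∃ x : Fin n × Fin d → ℂ, MvPolynomial.eval x R ≠ 0 := by
    by_contra hall
    push_neg at hall
    exact hRne (MvPolynomial.funext fun x => by rw [hall x, map_zero])
  obtain ⟨x, hx⟩ := hx
  refine ⟨fun i k => x (i, k), fun Ψ hΨ φ => ?_⟩
  have hfac : MvPolynomial.eval x (Qpoly n d Ψ φ) ≠ 0 := by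
    rw [hR, map_prod] at hx
    have := Finset.prod_ne_zero_iff.1 hx (Ψ, φ) (Finset.mem_univ _)
    rwa [dif_pos hΨ] at this
  rw [Qpoly] at hfac
  simpa [MvPolynomial.eval_prod] using hfac

theorem good_isOpen_and_dense' (n d : ℕ) :
    IsOpen {C : Matrix (Fin n) (Fin d) ℂ |
      ∀ Ψ : Finset (Equiv.Perm (Fin d)), Ψ.Nonempty → ∀ φ : Fin d ↪ Fin n,
        ∑ π ∈ Ψ, ((Equiv.Perm.sign π : ℤ) : ℂ) * ∏ k, C (φ k) (π k) ≠ 0} := by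
  classical
  have hset : {C : Matrix (Fin n) (Fin d) ℂ |
      ∀ Ψ : Finset (Equiv.Perm (Fin d)), Ψ.Nonempty → ∀ φ : Fin d ↪ Fin n,
        ∑ π ∈ Ψ, ((Equiv.Perm.sign π : ℤ) : ℂ) * ∏ k, C (φ k) (π k) ≠ 0}
      = ⋂ (Ψ : Finset (Equiv.Perm (Fin d))) (φ : Fin d ↪ Fin n),
        {C : Matrix (Fin n) (Fin d) ℂ | Ψ.Nonempty →
          ∑ π ∈ Ψ, ((Equiv.Perm.sign π : ℤ) : ℂ) * ∏ k, C (φ k) (π k) ≠ 0} := by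
    ext C
    simp only [Set.mem_setOf_eq, Set.mem_iInter]
    exact ⟨fun h Ψ φ hΨ => h Ψ hΨ φ, fun h Ψ hΨ φ => h Ψ φ hΨ⟩
  rw [hset]
  refine isOpen_iInter_of_finite fun Ψ => isOpen_iInter_of_finite fun φ => ?_
  by_cases hΨ : Ψ.Nonempty
  · have : {C : Matrix (Fin n) (Fin d) ℂ | Ψ.Nonempty →
        ∑ π ∈ Ψ, ((Equiv.Perm.sign π : ℤ) : ℂ) * ∏ k, C (φ k) (π k) ≠ 0}
        = (fun C : Matrix (Fin n) (Fin d) ℂ =>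
            ∑ π ∈ Ψ, ((Equiv.Perm.sign π : ℤ) : ℂ) * ∏ k, C (φ k) (π k)) ⁻¹' {0}ᶜ := by
      ext C; simp [hΨ]
    rw [this]
    refine IsOpen.preimage ?_ isOpen_compl_singleton
    exact continuous_finset_sum _ fun π _ => continuous_const.mul
      (continuous_finset_prod _ fun k _ => (continuous_apply (π k)).comp (continuous_apply (φ k)))
  · have : {C : Matrix (Fin n) (Fin d) ℂ | Ψ.Nonempty →
        ∑ π ∈ Ψ, ((Equiv.Perm.sign π : ℤ) : ℂ) * ∏ k, C (φ k) (π k) ≠ 0} = Set.univ := by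
      ext C; simp [hΨ]
    rw [this]; exact isOpen_univ

theorem good_dense' (n d : ℕ) :
    Dense {C : Matrix (Fin n) (Fin d) ℂ |
      ∀ Ψ : Finset (Equiv.Perm (Fin d)), Ψ.Nonempty → ∀ φ : Fin d ↪ Fin n,
        ∑ π ∈ Ψ, ((Equiv.Perm.sign π : ℤ) : ℂ) * ∏ k, C (φ k) (π k) ≠ 0} := by
  classical
  obtain ⟨M, hM⟩ := exists_good_matrix n d
  intro A
  rw [mem_closure_iff_nhds]
  intro t ht
  -- the line z ↦ A + z • (M - A)
  set ψ : ℂ → Matrix (Fin n) (Fin d) ℂ := fun z => A + z • (M - A) with hψ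
  have hψc : Continuous ψ := by
    exact continuous_const.add (continuous_id.smul continuous_const)
  have hψ0 : ψ 0 = A := by simp [hψ]
  have hmem : ψ ⁻¹' t ∈ nhds (0 : ℂ) := by
    have := hψc.continuousAt (x := (0 : ℂ))
    exact this (hψ0 ▸ ht)
  -- the one-variable polynomial for each constraint
  set p : Finset (Equiv.Perm (Fin d)) → (Fin d ↪ Fin n) → Polynomial ℂ :=
    fun Ψ φ => ∑ π ∈ Ψ, Polynomial.C ((Equiv.Perm.sign π : ℤ) : ℂ) *
      ∏ k, (Polynomial.C (A (φ k) (π k)) +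
        Polynomial.X * Polynomial.C ((M - A) (φ k) (π k))) with hp
  have heval : ∀ Ψ φ (z : ℂ), (p Ψ φ).eval z =
      ∑ π ∈ Ψ, ((Equiv.Perm.sign π : ℤ) : ℂ) * ∏ k, (ψ z) (φ k) (π k) := by
    intro Ψ φ z
    simp [hp, hψ, Polynomial.eval_finset_sum, Polynomial.eval_prod,
      Matrix.add_apply, Matrix.smul_apply, smul_eq_mul]
  have hpne : ∀ Ψ : Finset (Equiv.Perm (Fin d)), Ψ.Nonempty → ∀ φ, p Ψ φ ≠ 0 := by
    intro Ψ hΨ φ h0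
    have h1 := heval Ψ φ 1
    rw [h0] at h1
    have hψ1 : ψ 1 = M := by simp [hψ]
    rw [hψ1] at h1
    exact hM Ψ hΨ φ (by rw [← h1, Polynomial.eval_zero])
  -- the bad set of parameters
  set B : Set ℂ := ⋃ (Ψ : Finset (Equiv.Perm (Fin d))) (φ : Fin d ↪ Fin n),
    if Ψ.Nonempty then {z | (p Ψ φ).eval z = 0} else ∅ with hB
  have hBfin : B.Finite := by
    refine Set.finite_iUnion fun Ψ => Set.finite_iUnion fun φ => ?_
    split
    · exact Polynomial.finite_setOf_isRoot (hpne Ψ ‹_› φ)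
    · exact Set.finite_empty
  obtain ⟨z, hzt, hzB⟩ := ((infinite_of_mem_nhds (0 : ℂ) hmem).diff hBfin).nonempty
  refine ⟨ψ z, hzt, ?_⟩
  intro Ψ hΨ φ
  rw [← heval]
  intro h0
  exact hzB (Set.mem_iUnion.2 ⟨Ψ, Set.mem_iUnion.2 ⟨φ, by rw [if_pos hΨ]; exact h0⟩⟩)

end GoodAux

/-- For all integers `n ≥ d ≥ 1`, the set `G(n,d)` of good coefficient
matrices is an open and dense subset of `ℂ^{n×d}`. -/
theorem good_isOpen_and_dense (n d : ℕ) (hd : 1 ≤ d) (hdn : d ≤ n) :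
    IsOpen {C : Matrix (Fin n) (Fin d) ℂ | Good C} ∧
      Dense {C : Matrix (Fin n) (Fin d) ℂ | Good C} := by
  exact ⟨good_isOpen_and_dense' n d, good_dense' n d⟩
end

section
/- Let n ≥ d ≥ 1 and C ∈ G(n,d). If C' = C([i_1,…,i_m],[j_1,…,j_ℓ]) is the m×ℓ submatrix of C formed from distinct rows i_1,…,i_m and distinct columns j_1,…,j_ℓ, with m ≥ ℓ, then C' ∈ G(m,ℓ). -/
open scoped BigOperators

lemma exists_embedding_extend {γ α β : Type*} [Fintype α] [Fintype β] [Fintype γ]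
    [DecidableEq α] [DecidableEq β]
    (e : γ ↪ α) (f : γ ↪ β) (h : Fintype.card α ≤ Fintype.card β) :
    ∃ ψ : α ↪ β, ∀ x, ψ (e x) = f x := by
  classical
  have hcard : Fintype.card (↥(Set.range e)ᶜ) ≤ Fintype.card (↥(Set.range f)ᶜ) := by
    rw [Fintype.card_compl_set, Fintype.card_compl_set,
      Set.card_range_of_injective e.injective, Set.card_range_of_injective f.injective]
    omega
  obtain ⟨g⟩ := Function.Embedding.nonempty_of_card_le hcard
  refine ⟨⟨fun x => if hx : x ∈ Set.range e then f (e.invOfMemRange ⟨x, hx⟩)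
    else (g ⟨x, hx⟩ : β), ?_⟩, ?_⟩
  · intro x y hxy
    by_cases hx : x ∈ Set.range e <;> by_cases hy : y ∈ Set.range e <;>
      simp only [hx, hy, dif_pos, dif_neg, not_false_iff] at hxy
    · have := f.injective hxy
      have hx' : e (e.invOfMemRange ⟨x, hx⟩) = x := e.left_inv_of_invOfMemRange ⟨x, hx⟩
      have hy' : e (e.invOfMemRange ⟨y, hy⟩) = y := e.left_inv_of_invOfMemRange ⟨y, hy⟩
      rw [← hx', ← hy', this]
    · exact absurd (hxy ▸ (g ⟨y, hy⟩).2) (not_not.2 ⟨_, rfl⟩)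
    · exact absurd (hxy ▸ (g ⟨x, hx⟩).2) (not_not.2 ⟨_, rfl⟩)
    · exact congrArg Subtype.val (g.injective (Subtype.ext hxy))
  · intro x
    change (if hx : e x ∈ Set.range e then f (e.invOfMemRange ⟨e x, hx⟩)
      else (g ⟨e x, hx⟩ : β)) = f x
    rw [dif_pos (Set.mem_range_self x)]
    congr 1
    apply e.injective
    exact e.left_inv_of_invOfMemRange ⟨e x, Set.mem_range_self x⟩

/-- Any `m×ℓ` submatrix (on distinct rows and distinct columns, `m ≥ ℓ`)
of a good coefficient matrix is again a good coefficient matrix. -/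
theorem good_submatrix (n d m l : ℕ) (hd : 1 ≤ d) (hdn : d ≤ n) (hlm : l ≤ m)
    (C : Matrix (Fin n) (Fin d) ℂ) (hC : Good C)
    (r : Fin m ↪ Fin n) (c : Fin l ↪ Fin d) :
    Good (C.submatrix r c) := by
  intro Ψ hΨ φ
  classical
  obtain ⟨ψ, hψ⟩ := exists_embedding_extend c (φ.trans r)
    (by simpa using hdn)
  set E : Equiv.Perm (Fin l) → Equiv.Perm (Fin d) :=
    fun π => π.viaFintypeEmbedding c with hE
  have hEinj : Function.Injective E := by
    intro π π' hpp
    refine Equiv.ext fun k => ?_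
    have h1 : E π (c k) = c (π k) := π.viaFintypeEmbedding_apply_image c k
    have h2 : E π' (c k) = c (π' k) := π'.viaFintypeEmbedding_apply_image c k
    exact c.injective (by rw [← h1, ← h2, hpp])
  have key := hC (Ψ.image E) (hΨ.image E) ψ
  rw [Finset.sum_image (fun a _ b _ h => hEinj h)] at key
  -- decompose each product
  have hprod : ∀ π ∈ Ψ, ((Equiv.Perm.sign (E π) : ℤ) : ℂ) * ∏ j, C (ψ j) (E π j)
      = (∏ j ∈ Finset.univ \ Finset.univ.image c, C (ψ j) j) *
        (((Equiv.Perm.sign π : ℤ) : ℂ) * ∏ k, (C.submatrix r c) (φ k) (π k)) := by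
    intro π _
    have hsign : Equiv.Perm.sign (E π) = Equiv.Perm.sign π :=
      Equiv.Perm.viaFintypeEmbedding_sign π c
    have hsplit : ∏ j, C (ψ j) (E π j) =
        (∏ j ∈ Finset.univ \ Finset.univ.image c, C (ψ j) (E π j)) *
        ∏ j ∈ Finset.univ.image c, C (ψ j) (E π j) :=
      (Finset.prod_sdiff (Finset.subset_univ _)).symm
    have h1 : ∏ j ∈ Finset.univ.image c, C (ψ j) (E π j)
        = ∏ k, (C.submatrix r c) (φ k) (π k) := by
      rw [Finset.prod_image (fun a _ b _ h => c.injective h)]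
      refine Finset.prod_congr rfl fun k _ => ?_
      rw [hψ k, π.viaFintypeEmbedding_apply_image c k]
      rfl
    have h2 : ∀ j ∈ Finset.univ \ Finset.univ.image c, C (ψ j) (E π j) = C (ψ j) j := by
      intro j hj
      rw [π.viaFintypeEmbedding_apply_notMem_range c]
      simp only [Finset.mem_sdiff, Finset.mem_image, Finset.mem_univ, true_and] at hj
      rintro ⟨k, rfl⟩
      exact hj ⟨k, rfl⟩
    rw [hsign, hsplit, Finset.prod_congr rfl h2, h1]
    ring
  rw [Finset.sum_congr rfl hprod, ← Finset.mul_sum] at key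
  exact fun h => key (by rw [h, mul_zero])
end

section
/- Let M̃ be a d×d matrix over the field K = HahnSeries ℚ ℂ with all entries nonzero, and suppose the matrix of leading coefficients L(M̃) lies in G(d,d). Then det(M̃) ≠ 0 and V(det(M̃)) = perm(V(M̃)), i.e. the valuation of the determinant equals the max-plus permanent max_{π∈Π(d)} ∑_{j=1}^{d} V(M̃)_{π(j),j} of the entrywise valuation matrix. -/
open scoped BigOperators

open Finset in
lemma hahn_prod_facts {d : ℕ} (f : Fin d → HahnSeries ℚ ℂ) (hf : ∀ j, f j ≠ 0) :
    (∏ j, f j) ≠ 0 ∧ (∏ j, f j).order = ∑ j, (f j).order ∧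
      (∏ j, f j).coeff (∑ j, (f j).order) = ∏ j, (f j).coeff (f j).order := by
  classical
  have key : ∀ s : Finset (Fin d), (∏ j ∈ s, f j) ≠ 0 ∧
      (∏ j ∈ s, f j).order = ∑ j ∈ s, (f j).order ∧
      (∏ j ∈ s, f j).coeff (∑ j ∈ s, (f j).order) = ∏ j ∈ s, (f j).coeff (f j).order := by
    intro s
    induction s using Finset.cons_induction with
    | empty => simp
    | cons a s ha ih =>
      obtain ⟨h1, h2, h3⟩ := ih
      simp only [Finset.prod_cons, Finset.sum_cons]
      have hfa := hf a
      refine ⟨mul_ne_zero hfa h1, ?_, ?_⟩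
      · rw [HahnSeries.order_mul hfa h1, h2]
      · have := HahnSeries.coeff_mul_order_add_order (f a) (∏ j ∈ s, f j)
        rw [h2] at this
        rw [this, HahnSeries.leadingCoeff_eq, HahnSeries.leadingCoeff_eq,
          h2, h3]
  exact key Finset.univ


/-- For a square matrix `M̃` over the Hahn series field `K = HahnSeries ℚ ℂ`
with all entries nonzero and generic leading coefficients (`L(M̃) ∈ G(d,d)`),
the determinant is nonzero and its valuation `V(det M̃) = -order(det M̃)` equals the
max-plus permanent of the entrywise valuation matrix `V(M̃)`. -/
theorem valuation_det_eq_mpPerm (d : ℕ) (hd : 1 ≤ d)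
    (M : Matrix (Fin d) (Fin d) (HahnSeries ℚ ℂ))
    (h0 : ∀ i j, M i j ≠ 0)
    (hG : Good (fun i j => (M i j).coeff (M i j).order)) :
    M.det ≠ 0 ∧
      ((-(HahnSeries.order M.det) : ℚ) : ℝ) =
        mpPerm (fun a b : Fin d => ((-(M a b).order : ℚ) : ℝ)) := by
  unfold mpPerm Good at *
  classical
  haveI : NeZero d := ⟨by omega⟩
  set ord : Equiv.Perm (Fin d) → ℚ := fun π => ∑ j, (M (π j) j).order with hordd
  have hne : (Finset.univ : Finset (Equiv.Perm (Fin d))).Nonempty := Finset.univ_nonempty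
  set o : ℚ := Finset.univ.inf' hne ord with ho
  have hole : ∀ π, o ≤ ord π := fun π => Finset.inf'_le _ (Finset.mem_univ π)
  obtain ⟨π₀, -, hπ₀⟩ := Finset.exists_mem_eq_inf' hne ord
  -- facts about each product
  have hP : ∀ π : Equiv.Perm (Fin d), (∏ j, M (π j) j) ≠ 0 ∧
      (∏ j, M (π j) j).order = ord π ∧
      (∏ j, M (π j) j).coeff (ord π) = ∏ j, (M (π j) j).coeff ((M (π j) j).order) := by
    intro π
    exact hahn_prod_facts (fun j => M (π j) j) (fun j => h0 _ _)
  -- coefficient of det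
  have hcoeff : ∀ q : ℚ, M.det.coeff q =
      ∑ π : Equiv.Perm (Fin d), ((Equiv.Perm.sign π : ℤ) : ℂ) * (∏ j, M (π j) j).coeff q := by
    intro q
    rw [Matrix.det_apply' M]
    rw [show (∑ π : Equiv.Perm (Fin d),
        ((Equiv.Perm.sign π : ℤ) : HahnSeries ℚ ℂ) * ∏ j, M (π j) j).coeff q =
        ∑ π : Equiv.Perm (Fin d),
        (((Equiv.Perm.sign π : ℤ) : HahnSeries ℚ ℂ) * ∏ j, M (π j) j).coeff q from
      map_sum (HahnSeries.coeff.addMonoidHom q) _ _]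
    refine Finset.sum_congr rfl fun π _ => ?_
    rw [← zsmul_eq_mul, ← zsmul_eq_mul]
    exact map_zsmul (HahnSeries.coeff.addMonoidHom q) _ _
  set Ψ : Finset (Equiv.Perm (Fin d)) := Finset.univ.filter (fun π => ord π = o) with hΨ
  have hΨne : Ψ.Nonempty := ⟨π₀, by simp [hΨ, hπ₀.symm, ho]⟩
  have hco : M.det.coeff o =
      ∑ π ∈ Ψ, ((Equiv.Perm.sign π : ℤ) : ℂ) * ∏ j, (M (π j) j).coeff ((M (π j) j).order) := by
    rw [hcoeff o, hΨ]
    rw [← Finset.sum_filter_of_ne (p := fun π => ord π = o) (by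
      intro π _ hne2
      by_contra hordπ
      apply hne2
      have : o < ord π := lt_of_le_of_ne (hole π) (Ne.symm hordπ)
      rw [← (hP π).2.1] at this
      rw [HahnSeries.coeff_eq_zero_of_lt_order this, mul_zero])]
    refine Finset.sum_congr rfl fun π hπ => ?_
    rw [Finset.mem_filter] at hπ
    rw [← hπ.2, (hP π).2.2]
  -- the key nonvanishing
  have hkey : M.det.coeff o ≠ 0 := by
    rw [hco]
    have hGG := hG (Ψ.image (fun π => π⁻¹))
      (hΨne.image _) (Function.Embedding.refl (Fin d))
    rw [Finset.sum_image (by intro x _ y _ h; simpa using congrArg (·⁻¹) h)] at hGG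
    convert hGG using 1
    refine Finset.sum_congr rfl fun π _ => ?_
    rw [Equiv.Perm.sign_inv]
    congr 1
    rw [← Equiv.prod_comp π (fun k => (M (Function.Embedding.refl (Fin d) k)
      ((π⁻¹ : Equiv.Perm (Fin d)) k)).coeff ((M (Function.Embedding.refl (Fin d) k)
      ((π⁻¹ : Equiv.Perm (Fin d)) k)).order))]
    simp
  have hdet0 : M.det ≠ 0 := fun h => hkey (by simp [h])
  have hqlt : ∀ q : ℚ, q < o → M.det.coeff q = 0 := by
    intro q hq
    rw [hcoeff q]
    refine Finset.sum_eq_zero fun π _ => ?_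
    have : q < (∏ j, M (π j) j).order := by rw [(hP π).2.1]; exact lt_of_lt_of_le hq (hole π)
    rw [HahnSeries.coeff_eq_zero_of_lt_order this, mul_zero]
  have horder : M.det.order = o := by
    refine le_antisymm (HahnSeries.order_le_of_coeff_ne_zero hkey) ?_
    by_contra h
    push_neg at h
    exact (HahnSeries.coeff_order_eq_zero.not.mpr hdet0) (hqlt _ h)
  refine ⟨hdet0, ?_⟩
  rw [horder]
  -- now the sup computation
  have hbound : ∀ φ : Fin d ↪ Fin d,
      (∑ j, ((-(M (φ j) j).order : ℚ) : ℝ)) ≤ ((-o : ℚ) : ℝ) := by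
    intro φ
    have hbij : Function.Bijective φ := Finite.injective_iff_bijective.mp φ.injective
    set e : Equiv.Perm (Fin d) := Equiv.ofBijective φ hbij with he
    have : ∑ j, ((-(M (φ j) j).order : ℚ) : ℝ) = ((-(ord e) : ℚ) : ℝ) := by
      rw [hordd]
      push_cast
      rw [← Finset.sum_neg_distrib]
      rfl
    rw [this]
    have h2 := hole e
    push_cast
    exact neg_le_neg (Rat.cast_le.mpr h2)
  have hval : ∀ π : Equiv.Perm (Fin d),
      (∑ j, ((-(M (π.toEmbedding j) j).order : ℚ) : ℝ)) = ((-(ord π) : ℚ) : ℝ) := by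
    intro π
    rw [hordd]; push_cast; rw [← Finset.sum_neg_distrib]; rfl
  haveI : Nonempty (Fin d ↪ Fin d) := ⟨π₀.toEmbedding⟩
  refine le_antisymm ?_ ?_
  · calc ((-o : ℚ) : ℝ) = ∑ j, ((-(M (π₀.toEmbedding j) j).order : ℚ) : ℝ) := by
          rw [hval π₀, ← hπ₀]
       _ ≤ _ := le_ciSup (f := fun φ : Fin d ↪ Fin d =>
          ∑ j, ((-(M (φ j) j).order : ℚ) : ℝ))
          ⟨((-o : ℚ) : ℝ), by rintro x ⟨φ, rfl⟩; exact hbound φ⟩ π₀.toEmbedding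
  · exact ciSup_le hbound
end

section
/- Let M̃ be a d×d matrix over the field K = HahnSeries ℚ ℂ with all entries nonzero, and suppose L(M̃) ∈ G(d,d). Then M̃ is invertible, every entry of M̃^{-1} is nonzero, and for all i,j ∈ {1,…,d}: V((M̃^{-1})_{ij}) = (V(M̃)^{⊗−1})_{ij}, i.e. V((M̃^{-1})_{ij}) = perm(V(M̃) with row j and column i deleted) − perm(V(M̃)). -/
open scoped BigOperators

namespace MpAux

open HahnSeries Finset Equiv

local notation "K" => HahnSeries ℚ ℂ

lemma leadingCoeff_mul' {x y : K} (hx : x ≠ 0) (hy : y ≠ 0) :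
    (x * y).leadingCoeff = x.leadingCoeff * y.leadingCoeff := by
  rw [leadingCoeff_eq, order_mul hx hy]
  exact coeff_mul_order_add_order x y

lemma leadingCoeff_neg' (x : K) : (-x).leadingCoeff = -x.leadingCoeff := by
  rw [leadingCoeff_eq, leadingCoeff_eq, order_neg, coeff_neg]

lemma prod_facts {α : Type*} (s : Finset α) (f : α → K)
    (hf : ∀ a ∈ s, f a ≠ 0) :
    (∏ a ∈ s, f a) ≠ 0 ∧ (∏ a ∈ s, f a).order = ∑ a ∈ s, (f a).order ∧
      (∏ a ∈ s, f a).leadingCoeff = ∏ a ∈ s, (f a).leadingCoeff := by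
  classical
  induction s using Finset.induction_on with
  | empty => simp [HahnSeries.order_one, HahnSeries.leadingCoeff_one]
  | insert _ _ ha ih =>
    rename_i a s
    obtain ⟨h1, h2, h3⟩ := ih (fun x hx => hf x (Finset.mem_insert_of_mem hx))
    have ha0 : f a ≠ 0 := hf a (Finset.mem_insert_self a s)
    refine ⟨?_, ?_, ?_⟩
    · rw [Finset.prod_insert ha]; exact mul_ne_zero ha0 h1
    · rw [Finset.prod_insert ha, Finset.sum_insert ha, order_mul ha0 h1, h2]
    · rw [Finset.prod_insert ha, Finset.prod_insert ha, leadingCoeff_mul' ha0 h1, h3]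

lemma sum_facts {α : Type*} [DecidableEq α] (T : Finset α) (g : α → K)
    (m : ℚ) (hg : ∀ a ∈ T, g a ≠ 0) (hord : ∀ a ∈ T, m ≤ (g a).order)
    (hne : ∑ a ∈ T.filter (fun a => (g a).order = m), (g a).leadingCoeff ≠ 0) :
    (∑ a ∈ T, g a) ≠ 0 ∧ (∑ a ∈ T, g a).order = m := by
  have hcoeff : ∀ q : ℚ, (∑ a ∈ T, g a).coeff q = ∑ a ∈ T, (g a).coeff q := by
    intro q
    exact map_sum (HahnSeries.coeff.addMonoidHom q) g T
  have hm : (∑ a ∈ T, g a).coeff m =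
      ∑ a ∈ T.filter (fun a => (g a).order = m), (g a).leadingCoeff := by
    rw [hcoeff]
    rw [← Finset.sum_filter_of_ne (p := fun a => (g a).order = m)
      (fun a ha hca => le_antisymm (order_le_of_coeff_ne_zero hca) (hord a ha))]
    refine Finset.sum_congr rfl fun a ha => ?_
    obtain ⟨haT, haor⟩ := Finset.mem_filter.mp ha
    rw [leadingCoeff_eq, haor]
  have hSm : (∑ a ∈ T, g a).coeff m ≠ 0 := by rw [hm]; exact hne
  have hS0 : (∑ a ∈ T, g a) ≠ 0 := by
    intro h; rw [h] at hSm; simp at hSm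
  refine ⟨hS0, le_antisymm (order_le_of_coeff_ne_zero hSm) ?_⟩
  by_contra hlt
  push_neg at hlt
  have h1 : (∑ a ∈ T, g a).coeff ((∑ a ∈ T, g a).order) = 0 := by
    rw [hcoeff]
    refine Finset.sum_eq_zero fun a ha => ?_
    exact coeff_eq_zero_of_lt_order (lt_of_lt_of_le hlt (hord a ha))
  exact hS0 (coeff_order_eq_zero.mp h1)

lemma core {d : ℕ} (M : Matrix (Fin d) (Fin d) K) (h0 : ∀ i j, M i j ≠ 0)
    (hG : Good (fun i j => (M i j).coeff (M i j).order))
    (s : Finset (Fin d)) (T : Finset (Equiv.Perm (Fin d))) (hT : T.Nonempty)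
    (hagree : ∀ σ ∈ T, ∀ τ ∈ T, ∀ k, k ∉ s → σ k = τ k) :
    (∑ σ ∈ T, ((Equiv.Perm.sign σ : ℤ) : K) * ∏ k ∈ s, M (σ k) k) ≠ 0 ∧
      (∑ σ ∈ T, ((Equiv.Perm.sign σ : ℤ) : K) * ∏ k ∈ s, M (σ k) k).order
        = T.inf' hT (fun σ => ∑ k ∈ s, (M (σ k) k).order) := by
  classical
  set g : Equiv.Perm (Fin d) → K :=
    fun σ => ((Equiv.Perm.sign σ : ℤ) : K) * ∏ k ∈ s, M (σ k) k with hgdef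
  have hpf : ∀ σ : Equiv.Perm (Fin d), (∏ k ∈ s, M (σ k) k) ≠ 0 ∧
      (∏ k ∈ s, M (σ k) k).order = ∑ k ∈ s, (M (σ k) k).order ∧
      (∏ k ∈ s, M (σ k) k).leadingCoeff = ∏ k ∈ s, (M (σ k) k).leadingCoeff :=
    fun σ => prod_facts s _ (fun k _ => h0 (σ k) k)
  have hgval : ∀ σ : Equiv.Perm (Fin d), g σ = ∏ k ∈ s, M (σ k) k ∨
      g σ = -∏ k ∈ s, M (σ k) k := by
    intro σ
    rcases Int.units_eq_one_or (Equiv.Perm.sign σ) with h | h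
    · left; simp [hgdef, h]
    · right; simp only [hgdef, h]; push_cast; ring
  have hg0 : ∀ σ, g σ ≠ 0 := by
    intro σ
    rcases hgval σ with h | h <;> rw [h]
    · exact (hpf σ).1
    · exact neg_ne_zero.mpr (hpf σ).1
  have hgo : ∀ σ, (g σ).order = ∑ k ∈ s, (M (σ k) k).order := by
    intro σ
    rcases hgval σ with h | h <;> rw [h]
    · exact (hpf σ).2.1
    · rw [HahnSeries.order_neg]; exact (hpf σ).2.1
  have hgl : ∀ σ, (g σ).leadingCoeff =
      ((Equiv.Perm.sign σ : ℤ) : ℂ) * ∏ k ∈ s, (M (σ k) k).leadingCoeff := by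
    intro σ
    rcases Int.units_eq_one_or (Equiv.Perm.sign σ) with h | h
    · have h1 : g σ = ∏ k ∈ s, M (σ k) k := by simp [hgdef, h]
      rw [h1, (hpf σ).2.2, h]; simp
    · have h1 : g σ = -∏ k ∈ s, M (σ k) k := by simp only [hgdef, h]; push_cast; ring
      rw [h1, leadingCoeff_neg', (hpf σ).2.2, h]; simp
  set m : ℚ := T.inf' hT (fun σ => ∑ k ∈ s, (M (σ k) k).order) with hmdef
  have hord : ∀ σ ∈ T, m ≤ (g σ).order := by
    intro σ hσ; rw [hgo]; exact Finset.inf'_le _ hσ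
  set Ψ : Finset (Equiv.Perm (Fin d)) := T.filter (fun σ => (g σ).order = m) with hΨdef
  -- Ψ is nonempty
  obtain ⟨σ₀, hσ₀T, hσ₀⟩ := Finset.exists_mem_eq_inf' hT (fun σ => ∑ k ∈ s, (M (σ k) k).order)
  have hσ₀Ψ : σ₀ ∈ Ψ := Finset.mem_filter.mpr ⟨hσ₀T, by rw [hgo]; exact hσ₀.symm⟩
  -- the leading coefficient sum is nonzero
  have hne : ∑ σ ∈ Ψ, (g σ).leadingCoeff ≠ 0 := by
    have hΨT : ∀ σ ∈ Ψ, σ ∈ T := fun σ hσ => (Finset.mem_filter.mp hσ).1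
    set c : ℂ := ∏ k ∈ sᶜ, (M (σ₀ k) k).leadingCoeff with hcdef
    have hc0 : c ≠ 0 := by
      refine Finset.prod_ne_zero_iff.mpr fun k _ => ?_
      exact leadingCoeff_ne_zero.mpr (h0 (σ₀ k) k)
    have key : c * ∑ σ ∈ Ψ, (g σ).leadingCoeff =
        ∑ σ ∈ Ψ, ((Equiv.Perm.sign σ : ℤ) : ℂ) * ∏ k, (M (σ k) k).leadingCoeff := by
      rw [Finset.mul_sum]
      refine Finset.sum_congr rfl fun σ hσ => ?_
      have hcσ : (∏ k ∈ sᶜ, (M (σ k) k).leadingCoeff) = c := by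
        refine Finset.prod_congr rfl fun k hk => ?_
        rw [hagree σ (hΨT σ hσ) σ₀ hσ₀T k (by simpa using hk)]
      rw [hgl σ, ← Finset.prod_mul_prod_compl s (fun k => (M (σ k) k).leadingCoeff), hcσ]
      ring
    have hGood : ∑ σ ∈ Ψ, ((Equiv.Perm.sign σ : ℤ) : ℂ) *
        ∏ k, (M (σ k) k).leadingCoeff ≠ 0 := by
      have hinj : ∀ x ∈ Ψ, ∀ y ∈ Ψ, x⁻¹ = y⁻¹ → x = y := fun x _ y _ h => inv_injective h
      have himg : ∑ π ∈ Ψ.image (·⁻¹), ((Equiv.Perm.sign π : ℤ) : ℂ) *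
            ∏ k, (M k (π k)).leadingCoeff
          = ∑ σ ∈ Ψ, ((Equiv.Perm.sign σ : ℤ) : ℂ) * ∏ k, (M (σ k) k).leadingCoeff := by
        rw [Finset.sum_image hinj]
        refine Finset.sum_congr rfl fun σ _ => ?_
        have h1 : ∏ k, (M k (σ⁻¹ k)).leadingCoeff = ∏ k, (M (σ k) k).leadingCoeff := by
          rw [← Equiv.prod_comp σ (fun x => (M x (σ⁻¹ x)).leadingCoeff)]
          simp
        rw [Equiv.Perm.sign_inv, h1]
      rw [← himg]
      have hGne : (Ψ.image (·⁻¹)).Nonempty := ⟨σ₀⁻¹, Finset.mem_image_of_mem _ hσ₀Ψ⟩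
      have := hG (Ψ.image (·⁻¹)) hGne (Function.Embedding.refl _)
      simpa [leadingCoeff_eq] using this
    intro h
    rw [h, mul_zero] at key
    exact hGood key.symm
  exact sum_facts T g m (fun a _ => hg0 a) hord (by rw [← hΨdef] at *; exact hne)

lemma mpPerm_full {d : ℕ} (O : Matrix (Fin d) (Fin d) ℚ) :
    mpPerm (fun a b => ((-O a b : ℚ) : ℝ)) =
      ((-( (Finset.univ : Finset (Equiv.Perm (Fin d))).inf'
          ⟨1, Finset.mem_univ 1⟩ (fun σ => ∑ k, O (σ k) k)) : ℚ) : ℝ) := by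
  classical
  haveI : Nonempty (Fin d ↪ Fin d) := ⟨Function.Embedding.refl _⟩
  unfold mpPerm
  apply le_antisymm
  · apply ciSup_le
    intro φ
    set σ : Equiv.Perm (Fin d) :=
      Equiv.ofBijective φ (Finite.injective_iff_bijective.mp φ.injective) with hσ
    have hφσ : ∀ k, φ k = σ k := fun k => rfl
    have h1 : ∑ j, ((-O (φ j) j : ℚ) : ℝ) = ((-(∑ k, O (σ k) k) : ℚ) : ℝ) := by
      push_cast
      rw [← Finset.sum_neg_distrib]
      exact Finset.sum_congr rfl fun k _ => by rw [hφσ k]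
    rw [h1]
    exact_mod_cast neg_le_neg (Finset.inf'_le (fun σ => ∑ k, O (σ k) k) (Finset.mem_univ σ))
  · obtain ⟨σ₀, _, h₀⟩ := Finset.exists_mem_eq_inf'
      (⟨1, Finset.mem_univ 1⟩ : (Finset.univ : Finset (Equiv.Perm (Fin d))).Nonempty)
      (fun σ => ∑ k, O (σ k) k)
    rw [h₀]
    have hle := le_ciSup (f := fun φ : Fin d ↪ Fin d => ∑ j, ((-O (φ j) j : ℚ) : ℝ))
      (Set.Finite.bddAbove (Set.finite_range _)) σ₀.toEmbedding
    have h1 : ∑ j, ((-O (σ₀.toEmbedding j) j : ℚ) : ℝ) = ((-(∑ k, O (σ₀ k) k) : ℚ) : ℝ) := by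
      push_cast
      rw [← Finset.sum_neg_distrib]
      rfl
    rw [h1] at hle
    exact hle

lemma mpPermDel_full {d : ℕ} (O : Matrix (Fin d) (Fin d) ℚ) (i j : Fin d)
    (hTne : (Finset.univ.filter (fun σ : Equiv.Perm (Fin d) => σ i = j)).Nonempty) :
    mpPermDel (fun a b => ((-O a b : ℚ) : ℝ)) j i =
      ((-( (Finset.univ.filter (fun σ : Equiv.Perm (Fin d) => σ i = j)).inf'
          hTne (fun σ => ∑ k ∈ Finset.univ.erase i, O (σ k) k)) : ℚ) : ℝ) := by
  classical
  set T := Finset.univ.filter (fun σ : Equiv.Perm (Fin d) => σ i = j) with hTdef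
  obtain ⟨σ₀, hσ₀T, h₀⟩ := Finset.exists_mem_eq_inf' hTne
    (fun σ => ∑ k ∈ Finset.univ.erase i, O (σ k) k)
  have hσ₀ij : σ₀ i = j := (Finset.mem_filter.mp hσ₀T).2
  -- embedding from σ₀
  have hψprop : ∀ b : {b : Fin d // b ≠ i}, σ₀ (b : Fin d) ≠ j := by
    rintro ⟨b, hb⟩ h
    exact hb (σ₀.injective (h.trans hσ₀ij.symm))
  set ψ : {b : Fin d // b ≠ i} ↪ {a : Fin d // a ≠ j} :=
    ⟨fun b => ⟨σ₀ b, hψprop b⟩, by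
      intro x y h
      exact Subtype.ext (σ₀.injective (congrArg Subtype.val h))⟩ with hψdef
  haveI : Nonempty ({b : Fin d // b ≠ i} ↪ {a : Fin d // a ≠ j}) := ⟨ψ⟩
  have hsub : ∀ (σ : Equiv.Perm (Fin d)),
      ∑ k ∈ Finset.univ.erase i, O (σ k) k = ∑ b : {b : Fin d // b ≠ i}, O (σ b) b := by
    intro σ
    exact Finset.sum_subtype (Finset.univ.erase i)
      (fun x => by simp [Finset.mem_erase]) (fun k => O (σ k) k)
  unfold mpPermDel mpPerm
  apply le_antisymm
  · apply ciSup_le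
    intro φ
    set f : Fin d → Fin d := fun x => if h : x = i then j else (φ ⟨x, h⟩ : Fin d) with hfdef
    have hinj : Function.Injective f := by
      intro x y hxy
      by_cases hx : x = i <;> by_cases hy : y = i
      · rw [hx, hy]
      · exfalso
        rw [hfdef] at hxy
        simp only [dif_pos hx, dif_neg hy] at hxy
        exact (φ ⟨y, hy⟩).2 hxy.symm
      · exfalso
        rw [hfdef] at hxy
        simp only [dif_pos hy, dif_neg hx] at hxy
        exact (φ ⟨x, hx⟩).2 hxy
      · rw [hfdef] at hxy
        simp only [dif_neg hx, dif_neg hy] at hxy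
        have := φ.injective (Subtype.ext hxy)
        exact congrArg Subtype.val this
    set σ : Equiv.Perm (Fin d) :=
      Equiv.ofBijective f (Finite.injective_iff_bijective.mp hinj) with hσdef
    have hσT : σ ∈ T := by
      rw [hTdef]
      refine Finset.mem_filter.mpr ⟨Finset.mem_univ _, ?_⟩
      show f i = j
      rw [hfdef]; simp
    have hσφ : ∀ b : {b : Fin d // b ≠ i}, σ (b : Fin d) = φ b := by
      rintro ⟨b, hb⟩
      show f b = _
      rw [hfdef]
      simp [dif_neg hb]
    have h1 : ∑ b : {b : Fin d // b ≠ i}, ((-O (φ b) b : ℚ) : ℝ)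
        = ((-(∑ k ∈ Finset.univ.erase i, O (σ k) k) : ℚ) : ℝ) := by
      rw [hsub σ]
      push_cast
      rw [← Finset.sum_neg_distrib]
      exact Finset.sum_congr rfl fun b _ => by rw [hσφ b]
    calc ∑ b : {b : Fin d // b ≠ i},
          (fun a b => ((-O a b : ℚ) : ℝ)) ((φ b : Fin d)) ((b : Fin d))
          = ((-(∑ k ∈ Finset.univ.erase i, O (σ k) k) : ℚ) : ℝ) := h1
      _ ≤ _ := by exact_mod_cast neg_le_neg (Finset.inf'_le (fun σ => ∑ k ∈ Finset.univ.erase i, O (σ k) k) hσT)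
  · rw [h₀]
    have hle := le_ciSup
      (f := fun φ : {b : Fin d // b ≠ i} ↪ {a : Fin d // a ≠ j} =>
        ∑ b : {b : Fin d // b ≠ i}, ((-O (φ b : Fin d) (b : Fin d) : ℚ) : ℝ))
      (Set.Finite.bddAbove (Set.finite_range _)) ψ
    have h1 : ∑ b : {b : Fin d // b ≠ i}, ((-O (ψ b : Fin d) (b : Fin d) : ℚ) : ℝ)
        = ((-(∑ k ∈ Finset.univ.erase i, O (σ₀ k) k) : ℚ) : ℝ) := by
      rw [hsub σ₀]
      push_cast
      rw [← Finset.sum_neg_distrib]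
      rfl
    rw [h1] at hle
    exact hle

end MpAux

/-- For a square matrix `M̃` over `K = HahnSeries ℚ ℂ` with all entries
nonzero and `L(M̃) ∈ G(d,d)`, the matrix is invertible, every entry of `M̃⁻¹` is nonzero,
and `V((M̃⁻¹)_{ij}) = (V(M̃)^{⊗-1})_{ij}`, i.e. the valuation of each entry of the inverse
is given by the max-plus inverse of the valuation matrix. -/
theorem valuation_inv_eq_mpInv (d : ℕ) (hd : 1 ≤ d)
    (M : Matrix (Fin d) (Fin d) (HahnSeries ℚ ℂ))
    (h0 : ∀ i j, M i j ≠ 0)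
    (hG : Good (fun i j => (M i j).coeff (M i j).order)) :
    IsUnit M.det ∧
      ∀ i j, M⁻¹ i j ≠ 0 ∧
        ((-(HahnSeries.order (M⁻¹ i j)) : ℚ) : ℝ) =
          mpInv (fun a b : Fin d => ((-(M a b).order : ℚ) : ℝ)) i j := by
  classical
  -- determinant
  have hdetne : ((Finset.univ : Finset (Equiv.Perm (Fin d)))).Nonempty :=
    ⟨1, Finset.mem_univ 1⟩
  set qdet : ℚ := (Finset.univ : Finset (Equiv.Perm (Fin d))).inf' hdetne
    (fun σ => ∑ k, (M (σ k) k).order) with hqdet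
  have hdet0 : M.det ≠ 0 ∧ M.det.order = qdet := by
    have hc := MpAux.core M h0 hG Finset.univ Finset.univ hdetne
      (fun σ _ τ _ k hk => absurd (Finset.mem_univ k) hk)
    rwa [← Matrix.det_apply'] at hc
  have hunit : IsUnit M.det := isUnit_iff_ne_zero.mpr hdet0.1
  refine ⟨hunit, fun i j => ?_⟩
  -- adjugate
  set T := Finset.univ.filter (fun σ : Equiv.Perm (Fin d) => σ i = j) with hTdef
  have hTne : T.Nonempty :=
    ⟨Equiv.swap i j, Finset.mem_filter.mpr ⟨Finset.mem_univ _, Equiv.swap_apply_left i j⟩⟩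
  set qadj : ℚ := T.inf' hTne (fun σ => ∑ k ∈ Finset.univ.erase i, (M (σ k) k).order)
    with hqadj
  have hadjeq : M.adjugate i j =
      ∑ σ ∈ T, ((Equiv.Perm.sign σ : ℤ) : HahnSeries ℚ ℂ) *
        ∏ k ∈ Finset.univ.erase i, M (σ k) k := by
    rw [Matrix.adjugate_apply, Matrix.det_apply']
    rw [← Finset.sum_filter_of_ne (p := fun σ : Equiv.Perm (Fin d) => σ i = j)]
    · refine Finset.sum_congr rfl fun σ hσ => ?_
      have hσij : σ i = j := (Finset.mem_filter.mp hσ).2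
      congr 1
      rw [← Finset.mul_prod_erase Finset.univ _ (Finset.mem_univ i)]
      have hfi : (M.updateRow j (Pi.single i 1)) (σ i) i = 1 := by
        rw [hσij, Matrix.updateRow_self, Pi.single_eq_same]
      rw [hfi, one_mul]
      refine Finset.prod_congr rfl fun k hk => ?_
      have hki : k ≠ i := (Finset.mem_erase.mp hk).1
      have hσkj : σ k ≠ j := fun h => hki (σ.injective (h.trans hσij.symm))
      rw [Matrix.updateRow_ne hσkj]
    · intro σ _ hne
      by_contra hσij
      apply hne
      have hk : σ (σ⁻¹ j) = j := σ.apply_symm_apply j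
      have hki : σ⁻¹ j ≠ i := fun h => hσij (by rw [← hk, h])
      have hzero : (M.updateRow j (Pi.single i 1)) (σ (σ⁻¹ j)) (σ⁻¹ j) = 0 := by
        rw [hk, Matrix.updateRow_self, Pi.single_eq_of_ne hki]
      have : (∏ k, (M.updateRow j (Pi.single i 1)) (σ k) k) = 0 :=
        Finset.prod_eq_zero (f := fun k => (M.updateRow j (Pi.single i 1)) (σ k) k)
          (Finset.mem_univ (σ⁻¹ j)) hzero
      rw [this, mul_zero]
  have hadj : M.adjugate i j ≠ 0 ∧ (M.adjugate i j).order = qadj := by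
    have hc := MpAux.core M h0 hG (Finset.univ.erase i) T hTne ?_
    · rwa [← hadjeq] at hc
    · intro σ hσ τ hτ k hk
      have hki : k = i := by
        by_contra hki
        exact hk (Finset.mem_erase.mpr ⟨hki, Finset.mem_univ k⟩)
      rw [hki, (Finset.mem_filter.mp hσ).2, (Finset.mem_filter.mp hτ).2]
  -- inverse entry
  have hinv : M⁻¹ i j = (M.det)⁻¹ * M.adjugate i j := by
    rw [Matrix.inv_def, Matrix.smul_apply, smul_eq_mul, Ring.inverse_eq_inv']
  have hdinv0 : (M.det)⁻¹ ≠ 0 := inv_ne_zero hdet0.1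
  have hinv0 : M⁻¹ i j ≠ 0 := by
    rw [hinv]; exact mul_ne_zero hdinv0 hadj.1
  have hordinv : ((M.det)⁻¹ : HahnSeries ℚ ℂ).order = -qdet := by
    have h1 : M.det * (M.det)⁻¹ = 1 := mul_inv_cancel₀ hdet0.1
    have h2 : M.det.order + ((M.det)⁻¹ : HahnSeries ℚ ℂ).order = 0 := by
      rw [← HahnSeries.order_mul hdet0.1 hdinv0, h1, HahnSeries.order_one]
    rw [← hdet0.2]; linarith
  have hord : (M⁻¹ i j).order = qadj - qdet := by
    rw [hinv, HahnSeries.order_mul hdinv0 hadj.1, hordinv, hadj.2]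
    ring
  refine ⟨hinv0, ?_⟩
  have h1 := MpAux.mpPerm_full (fun a b => (M a b).order)
  have h2 := MpAux.mpPermDel_full (fun a b => (M a b).order) i j hTne
  unfold mpInv
  rw [show (fun a b : Fin d => ((-(M a b).order : ℚ) : ℝ))
      = (fun a b : Fin d => ((-(fun a b : Fin d => (M a b).order) a b : ℚ) : ℝ)) from rfl]
  rw [h1, h2, hord]
  push_cast
  ring
end

section
/- Let 𝒜 be an n×d real matrix with n ≥ d ≥ 2, let φ ∈ oas(𝒜) be an optimal assignment of 𝒜, and let j ∈ {1,…,d}. Then perm(𝒜([1,…,n],[j]^c)) = perm(𝒜([φ(1),…,φ(d)],[j]^c)), i.e. the max-plus permanent of the n×(d−1) matrix obtained from 𝒜 by deleting column j equals the max-plus permanent of the d×(d−1) matrix formed from rows φ(1),…,φ(d) of 𝒜 with column j deleted. -/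
open scoped BigOperators

private lemma sum_split_ne {d : ℕ} (j : Fin d) (h : Fin d → ℝ) :
    ∑ c, h c = h j + ∑ c : {c : Fin d // c ≠ j}, h ↑c := by
  classical
  rw [Fintype.sum_eq_add_sum_compl j h]
  congr 1
  exact (Finset.sum_subtype (p := fun c => c ≠ j) {j}ᶜ (fun x => by simp) h)

private lemma key_exchange {n d : ℕ} (A : Matrix (Fin n) (Fin d) ℝ) (φ : Fin d ↪ Fin n)
    (hφ : φ ∈ oas A) (j : Fin d) (ψ : {c : Fin d // c ≠ j} ↪ Fin n) :
    ∃ χ : {c : Fin d // c ≠ j} ↪ Fin d,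
      (∑ c : {c : Fin d // c ≠ j}, A (ψ c) (c : Fin d)) ≤
        ∑ c : {c : Fin d // c ≠ j}, A (φ (χ c)) (c : Fin d) := by
  classical
  let R : {c : Fin d // c ≠ j} → {c : Fin d // c ≠ j} → Prop := fun a b => ψ b = φ (a : Fin d)
  let T : Set {c : Fin d // c ≠ j} := {c | ∃ b, ψ b ∉ Set.range φ ∧ Relation.ReflTransGen R b c}
  have hT_tail : ∀ c c' : {c : Fin d // c ≠ j}, c ∈ T → ψ c' = φ (c : Fin d) → c' ∈ T := by
    rintro c c' ⟨b, hb, h⟩ he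
    exact ⟨b, hb, h.tail he⟩
  have hT_last : ∀ c : {c : Fin d // c ≠ j}, c ∈ T → ψ c ∈ Set.range φ →
      ∃ c' : {c : Fin d // c ≠ j}, c' ∈ T ∧ ψ c = φ (c' : Fin d) := by
    rintro c ⟨b, hb, h⟩ hr
    rcases h.cases_tail with rfl | ⟨c', h1, h2⟩
    · exact absurd hr hb
    · exact ⟨c', ⟨b, hb, h1⟩, h2⟩
  let f : {c : Fin d // c ≠ j} → Fin n := fun c => if c ∈ T then φ (c : Fin d) else ψ c
  have hf_range : ∀ c, f c ∈ Set.range φ := by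
    intro c
    by_cases h : c ∈ T
    · simp only [f, if_pos h]
      exact Set.mem_range_self _
    · simp only [f, if_neg h]
      by_contra hr
      exact h ⟨c, hr, Relation.ReflTransGen.refl⟩
  have hf_inj : Function.Injective f := by
    intro x y hxy
    by_cases hx : x ∈ T <;> by_cases hy : y ∈ T
    · simp only [f, if_pos hx, if_pos hy] at hxy
      exact Subtype.ext (φ.injective hxy)
    · simp only [f, if_pos hx, if_neg hy] at hxy
      exact absurd (hT_tail x y hx hxy.symm) hy
    · simp only [f, if_neg hx, if_pos hy] at hxy
      exact absurd (hT_tail y x hy hxy) hx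
    · simp only [f, if_neg hx, if_neg hy] at hxy
      exact ψ.injective hxy
  -- the competing full assignment
  let g : Fin d → Fin n := fun c =>
    if h : c = j then φ c else (if (⟨c, h⟩ : {c : Fin d // c ≠ j}) ∈ T then ψ ⟨c, h⟩ else φ c)
  have hgj : g j = φ j := by simp [g]
  have hg_ne : ∀ c : {c : Fin d // c ≠ j}, g ↑c = if c ∈ T then ψ c else φ (c : Fin d) := by
    intro c
    simp only [g, dif_neg c.2, Subtype.coe_eta]
  have hg_inj : Function.Injective g := by
    intro x y hxy
    by_cases hx : x = j <;> by_cases hy : y = j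
    · rw [hx, hy]
    · rw [hx, hgj, hg_ne ⟨y, hy⟩] at hxy
      by_cases hyT : (⟨y, hy⟩ : {c : Fin d // c ≠ j}) ∈ T
      · rw [if_pos hyT] at hxy
        obtain ⟨c', _, hc'⟩ := hT_last _ hyT ⟨j, hxy⟩
        rw [← hxy] at hc'
        exact absurd (φ.injective hc').symm c'.2
      · rw [if_neg hyT] at hxy
        rw [hx]
        exact φ.injective hxy
    · rw [hy, hgj, hg_ne ⟨x, hx⟩] at hxy
      by_cases hxT : (⟨x, hx⟩ : {c : Fin d // c ≠ j}) ∈ T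
      · rw [if_pos hxT] at hxy
        obtain ⟨c', _, hc'⟩ := hT_last _ hxT ⟨j, hxy.symm⟩
        rw [hxy] at hc'
        exact absurd (φ.injective hc').symm c'.2
      · rw [if_neg hxT] at hxy
        rw [hy]
        exact φ.injective hxy
    · rw [hg_ne ⟨x, hx⟩, hg_ne ⟨y, hy⟩] at hxy
      by_cases hxT : (⟨x, hx⟩ : {c : Fin d // c ≠ j}) ∈ T <;> by_cases hyT : (⟨y, hy⟩ : {c : Fin d // c ≠ j}) ∈ T
      · rw [if_pos hxT, if_pos hyT] at hxy
        exact congrArg Subtype.val (ψ.injective hxy)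
      · rw [if_pos hxT, if_neg hyT] at hxy
        obtain ⟨c', hc'T, hc'⟩ := hT_last _ hxT ⟨y, hxy.symm⟩
        rw [hxy] at hc'
        have : (⟨y, hy⟩ : {c : Fin d // c ≠ j}) = c' := Subtype.ext (φ.injective hc'.symm).symm
        exact absurd (this ▸ hc'T) hyT
      · rw [if_neg hxT, if_pos hyT] at hxy
        obtain ⟨c', hc'T, hc'⟩ := hT_last _ hyT ⟨x, hxy⟩
        rw [← hxy] at hc'
        have : (⟨x, hx⟩ : {c : Fin d // c ≠ j}) = c' := Subtype.ext (φ.injective hc'.symm).symm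
        exact absurd (this ▸ hc'T) hxT
      · rw [if_neg hxT, if_neg hyT] at hxy
        exact φ.injective hxy
  -- g's value is at most the optimum
  have hg_le : (∑ c, A (g c) c) ≤ ∑ c, A (φ c) c := by
    have h1 : (∑ c, A (g c) c) ≤ mpPerm A := by
      have : BddAbove (Set.range fun e : Fin d ↪ Fin n => ∑ c, A (e c) c) :=
        (Set.finite_range _).bddAbove
      exact le_ciSup this ⟨g, hg_inj⟩
    rw [← hφ] at h1
    exact h1
  -- sum exchange identity
  have hsum : (∑ c : {c : Fin d // c ≠ j}, A (f c) ↑c) + ∑ c, A (g c) c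
      = (∑ c : {c : Fin d // c ≠ j}, A (ψ c) ↑c) + ∑ c, A (φ c) c := by
    rw [sum_split_ne j (fun c => A (g c) c), sum_split_ne j (fun c => A (φ c) c), hgj]
    rw [add_comm (A (φ j) j), add_comm (A (φ j) j), ← add_assoc, ← add_assoc,
      ← Finset.sum_add_distrib, ← Finset.sum_add_distrib]
    congr 1
    apply Finset.sum_congr rfl
    intro c _
    rw [hg_ne c]
    by_cases hc : c ∈ T
    · simp only [f, if_pos hc]
      ring
    · simp only [f, if_neg hc]
  have hf_le : (∑ c : {c : Fin d // c ≠ j}, A (ψ c) ↑c) ≤ ∑ c : {c : Fin d // c ≠ j}, A (f c) ↑c := by linarith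
  -- pull f back through φ
  let χfun : {c : Fin d // c ≠ j} → Fin d :=
    fun c => (Equiv.ofInjective φ φ.injective).symm ⟨f c, hf_range c⟩
  have hχ : ∀ c, φ (χfun c) = f c := by
    intro c
    exact Equiv.apply_ofInjective_symm φ.injective _
  refine ⟨⟨χfun, ?_⟩, ?_⟩
  · intro x y hxy
    apply hf_inj
    rw [← hχ x, ← hχ y, hxy]
  · exact hf_le.trans (le_of_eq (Finset.sum_congr rfl fun c _ =>
      congrArg (fun r => A r ↑c) (hχ c).symm))

/-- If `φ` is an optimal assignment of an `n×d` max-plus matrix `𝒜`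
(`n ≥ d ≥ 2`) and `j` is a column, then the max-plus permanent of `𝒜` with column `j`
deleted equals the max-plus permanent of the submatrix on rows `φ(1),…,φ(d)` with
column `j` deleted. -/
theorem mpPerm_deleteCol_eq_on_oas_rows (n d : ℕ) (hd : 2 ≤ d) (hdn : d ≤ n)
    (A : Matrix (Fin n) (Fin d) ℝ) (φ : Fin d ↪ Fin n) (hφ : φ ∈ oas A) (j : Fin d) :
    mpPerm (A.submatrix (id : Fin n → Fin n) (fun c : {c : Fin d // c ≠ j} => (c : Fin d))) =
      mpPerm (A.submatrix (fun t : Fin d => φ t) (fun c : {c : Fin d // c ≠ j} => (c : Fin d))) := by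
  classical
  have inst1 : Nonempty ({c : Fin d // c ≠ j} ↪ Fin n) :=
    ⟨(Function.Embedding.subtype _).trans φ⟩
  have inst2 : Nonempty ({c : Fin d // c ≠ j} ↪ Fin d) :=
    ⟨Function.Embedding.subtype _⟩
  unfold mpPerm
  simp only [Matrix.submatrix_apply, id_eq]
  apply le_antisymm
  · apply ciSup_le
    intro ψ
    obtain ⟨χ, hχ⟩ := key_exchange A φ hφ j ψ
    exact hχ.trans (le_ciSup (f := fun e : {c : Fin d // c ≠ j} ↪ Fin d =>
      ∑ x : {c : Fin d // c ≠ j}, A (φ (e x)) ↑x) ((Set.finite_range _).bddAbove) χ)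
  · apply ciSup_le
    intro χ
    exact le_ciSup (f := fun e : {c : Fin d // c ≠ j} ↪ Fin n =>
      ∑ x : {c : Fin d // c ≠ j}, A (e x) ↑x) ((Set.finite_range _).bddAbove) (χ.trans φ)
end

section
/- Let B be an m×ℓ real matrix with m ≥ ℓ, let φ ∈ oas(B) be an optimal assignment, and let j_1,…,j_k be distinct elements of {1,…,ℓ} with k < ℓ. Then perm(B([φ(j_1),…,φ(j_k)]^c,[j_1,…,j_k]^c)) = ∑_{t ∈ {1,…,ℓ}, t ∉ {j_1,…,j_k}} B_{φ(t),t}; that is, the max-plus permanent of the submatrix obtained by deleting rows φ(j_1),…,φ(j_k) and columns j_1,…,j_k equals the weight of the restriction of φ to the remaining columns. -/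
open scoped BigOperators

/-- If `φ` is an optimal assignment of an `m×ℓ` max-plus matrix `B`
(`m ≥ ℓ`) and `J` is a set of fewer than `ℓ` columns, then the max-plus permanent of the
submatrix obtained by deleting the rows `φ(J)` and the columns `J` equals the weight of
the restriction of `φ` to the remaining columns. -/
theorem mpPerm_delete_assigned (m l : ℕ) (hml : l ≤ m)
    (B : Matrix (Fin m) (Fin l) ℝ) (φ : Fin l ↪ Fin m) (hφ : φ ∈ oas B)
    (J : Finset (Fin l)) (hJ : J.card < l) :
    mpPerm (B.submatrix (fun r : {r : Fin m // r ∉ J.image φ} => (r : Fin m))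
                        (fun c : {c : Fin l // c ∉ J} => (c : Fin l))) =
      ∑ t ∈ Jᶜ, B (φ t) t := by
  classical
  have hφmem : ∀ c : {c : Fin l // c ∉ J}, (φ c : Fin m) ∉ J.image φ := by
    rintro ⟨c, hc⟩ h
    obtain ⟨a, ha, hac⟩ := Finset.mem_image.mp h
    have h2 := φ.injective hac
    rw [h2] at ha
    exact hc ha
  let φ' : {c : Fin l // c ∉ J} ↪ {r : Fin m // r ∉ J.image φ} :=
    ⟨fun c => ⟨φ c, hφmem c⟩, by
      intro a b h
      exact Subtype.ext (φ.injective (Subtype.ext_iff.mp h))⟩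
  haveI hne : Nonempty {c : Fin l // c ∉ J} := by
    have : 0 < Jᶜ.card := by
      rw [Finset.card_compl, Fintype.card_fin]; omega
    obtain ⟨c, hc⟩ := Finset.card_pos.mp this
    exact ⟨⟨c, Finset.mem_compl.mp hc⟩⟩
  have hsum : ∑ j : {c : Fin l // c ∉ J}, B (φ j) j = ∑ t ∈ Jᶜ, B (φ t) t := by
    rw [Finset.sum_subtype Jᶜ (fun c => Finset.mem_compl) (fun t => B (φ t) t)]
  have hbdd : ∀ {α β : Type} [inst : Fintype α] [inst2 : Fintype β]
      (f : (α ↪ β) → ℝ), BddAbove (Set.range f) := by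
    intro α β _ _ f
    exact Set.Finite.bddAbove (Set.finite_range f)
  haveI : Nonempty ({c : Fin l // c ∉ J} ↪ {r : Fin m // r ∉ J.image φ}) := ⟨φ'⟩
  have hB : mpPerm B = ∑ j, B (φ j) j := (hφ).symm
  apply le_antisymm
  · -- ≤
    apply ciSup_le
    intro ψ
    -- extend ψ to a full injection
    let Ψf : Fin l → Fin m := fun c => if h : c ∈ J then φ c else (ψ ⟨c, h⟩ : Fin m)
    have hΨinj : Function.Injective Ψf := by
      intro a b hab
      by_cases ha : a ∈ J <;> by_cases hb : b ∈ J <;> simp only [Ψf, ha, hb, dif_pos, dif_neg,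
        not_false_iff] at hab
      · exact φ.injective hab
      · exact absurd (hab ▸ Finset.mem_image_of_mem φ ha) (ψ ⟨b, hb⟩).2
      · exact absurd (hab ▸ Finset.mem_image_of_mem φ hb) (ψ ⟨a, ha⟩).2
      · have := ψ.injective (Subtype.ext hab)
        exact Subtype.ext_iff.mp this
    let Ψ : Fin l ↪ Fin m := ⟨Ψf, hΨinj⟩
    have hle : ∑ j, B (Ψ j) j ≤ mpPerm B :=
      le_ciSup (hbdd fun χ : Fin l ↪ Fin m => ∑ j, B (χ j) j) Ψ
    rw [hB] at hle
    have hsplit : ∀ χ : Fin l ↪ Fin m,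
        ∑ j, B (χ j) j = ∑ j ∈ J, B (χ j) j + ∑ j ∈ Jᶜ, B (χ j) j :=
      fun χ => (Finset.sum_add_sum_compl J _).symm
    rw [hsplit Ψ, hsplit φ] at hle
    have hJeq : ∑ j ∈ J, B (Ψ j) j = ∑ j ∈ J, B (φ j) j := by
      apply Finset.sum_congr rfl
      intro j hj
      simp [Ψ, Ψf, hj]
    rw [hJeq] at hle
    have hle2 : ∑ j ∈ Jᶜ, B (Ψ j) j ≤ ∑ j ∈ Jᶜ, B (φ j) j := by linarith
    have hΨc : ∑ j : {c : Fin l // c ∉ J}, B (ψ j) j = ∑ j ∈ Jᶜ, B (Ψ j) j := by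
      rw [Finset.sum_subtype Jᶜ (fun c => Finset.mem_compl) (fun t => B (Ψ t) t)]
      apply Finset.sum_congr rfl
      intro j _
      simp [Ψ, Ψf, j.2]
    calc ∑ j : {c : Fin l // c ∉ J},
          B.submatrix (fun r : {r : Fin m // r ∉ J.image φ} => (r : Fin m))
            (fun c : {c : Fin l // c ∉ J} => (c : Fin l)) (ψ j) j
        = ∑ j : {c : Fin l // c ∉ J}, B (ψ j) j := rfl
      _ = ∑ j ∈ Jᶜ, B (Ψ j) j := hΨc
      _ ≤ ∑ j ∈ Jᶜ, B (φ j) j := hle2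
  · -- ≥
    rw [← hsum]
    unfold mpPerm
    exact le_ciSup (f := fun ψ : {c : Fin l // c ∉ J} ↪ {r : Fin m // r ∉ J.image φ} =>
      ∑ j, B.submatrix (fun r : {r : Fin m // r ∉ J.image φ} => (r : Fin m))
        (fun c : {c : Fin l // c ∉ J} => (c : Fin l)) (ψ j) j) (hbdd _) φ'
end

section
/- Let 𝒜 be an n×d real matrix with n ≥ d, suppose the identity injection (j ↦ j for j = 1,…,d) is an optimal assignment of 𝒜, and let ℳ = 𝒜([1,…,d],[1,…,d]) be the top d×d block of 𝒜. Then the max-plus statistical leverage scores of 𝒜 satisfy: p_i(𝒜) = 0 for i = 1,…,d, and p_i(𝒜) = 2 · max_{j=1,…,d} (𝒜 ⊗ ℳ^{⊗−1})_{ij} = 2 · max_{j,k ∈ {1,…,d}} ( 𝒜_{ik} + (ℳ^{⊗−1})_{kj} ) for i = d+1,…,n. -/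
open scoped BigOperators

section MpAux

variable {n d : ℕ}

private lemma mpAux.sum_le_mpPerm {ι κ : Type*} [Fintype ι] [Fintype κ]
    (A : Matrix κ ι ℝ) (φ : ι ↪ κ) :
    ∑ j, A (φ j) j ≤ mpPerm A :=
  le_ciSup (f := fun φ : ι ↪ κ => ∑ j, A (φ j) j)
    (Set.Finite.bddAbove (Set.finite_range _)) φ

private lemma mpAux.sum_le_mpPermOb {ι κ : Type*} [Fintype ι] [Fintype κ]
    (A : Matrix κ ι ℝ) (i : κ) (φ : ι ↪ κ) (h : ∃ j, φ j = i) :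
    ∑ j, A (φ j) j ≤ mpPermOb A i :=
  le_ciSup (f := fun φ : {φ : ι ↪ κ // ∃ j, φ j = i} => ∑ j, A (φ.1 j) j)
    (Set.Finite.bddAbove (Set.finite_range _)) ⟨φ, h⟩

/-- One exchange step: if a column `c₁` is assigned to a row `≥ d`, we can reassign a
suitable set of columns to their identity rows without decreasing the total weight. -/
private lemma mpAux.step (hdn : d ≤ n) (A : Matrix (Fin n) (Fin d) ℝ)
    (hopt : ∑ j, A (Fin.castLE hdn j) j = mpPerm A)
    (φ : Fin d ↪ Fin n) (c₁ : Fin d) (hb : d ≤ ((φ c₁ : Fin n) : ℕ)) :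
    ∃ ψ : Fin d ↪ Fin n,
      (∀ j, ψ j = φ j ∨ ψ j = Fin.castLE hdn j) ∧
      ((ψ c₁ : ℕ) < d) ∧
      (∀ j, d ≤ ((φ j : Fin n) : ℕ) → φ j ≠ φ c₁ → ψ j = φ j) ∧
      ∑ j, A (φ j) j ≤ ∑ j, A (ψ j) j := by
  classical
  set b : Fin n := φ c₁ with hbdef
  set F : Fin n → Fin n := fun x => if h : (x : ℕ) < d then φ ⟨x, h⟩ else x with hFdef
  have hF_high : ∀ x : Fin n, d ≤ (x : ℕ) → ∀ m, F^[m] x = x := by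
    intro x hx m
    induction m with
    | zero => rfl
    | succ m ih =>
      rw [Function.iterate_succ_apply]
      have : F x = x := by simp [hFdef, Nat.not_lt.2 hx]
      rw [this, ih]
  have hcast : ∀ j : Fin d, F (Fin.castLE hdn j) = φ j := by
    intro j
    have h : ((Fin.castLE hdn j : Fin n) : ℕ) < d := j.isLt
    simp only [hFdef, dif_pos h]
    congr 1
  have hcastne : ∀ j : Fin d, (Fin.castLE hdn j : Fin n) ≠ b := by
    intro j h
    have : (j : ℕ) < d := j.isLt
    rw [← h] at hb
    simp at hb; omega
  set P : Fin d → Prop := fun j => ∃ m, F^[m] (Fin.castLE hdn j) = b with hPdef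
  have hPc₁ : P c₁ := ⟨1, by simp [hcast, hbdef]⟩
  have hP_prev : ∀ j j' : Fin d, φ j = Fin.castLE hdn j' → P j' → P j := by
    rintro j j' h ⟨m, hm⟩
    exact ⟨m + 1, by rw [Function.iterate_succ_apply, hcast, h, hm]⟩
  have hP_next : ∀ j j' : Fin d, φ j = Fin.castLE hdn j' → P j → P j' := by
    rintro j j' h ⟨m, hm⟩
    match m with
    | 0 => exact absurd hm (hcastne j)
    | m + 1 =>
      rw [Function.iterate_succ_apply, hcast, h] at hm
      exact ⟨m, hm⟩
  have hP_bad : ∀ j : Fin d, d ≤ ((φ j : Fin n) : ℕ) → φ j ≠ b → ¬ P j := by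
    rintro j hj hne ⟨m, hm⟩
    match m with
    | 0 => exact hcastne j hm
    | m + 1 =>
      rw [Function.iterate_succ_apply, hcast, hF_high _ hj] at hm
      exact hne hm
  set ψf : Fin d → Fin n := fun j => if P j then Fin.castLE hdn j else φ j with hψf
  have hψinj : Function.Injective ψf := by
    intro j₁ j₂ h
    by_cases h₁ : P j₁ <;> by_cases h₂ : P j₂ <;> simp only [hψf, h₁, h₂, if_pos, if_neg,
      if_true, if_false] at h
    · exact Fin.castLE_injective hdn h
    · exact absurd (hP_prev j₂ j₁ h.symm h₁) h₂
    · exact absurd (hP_prev j₁ j₂ h h₂) h₁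
    · exact φ.injective h
  set χf : Fin d → Fin n := fun j => if P j then φ j else Fin.castLE hdn j with hχf
  have hχinj : Function.Injective χf := by
    intro j₁ j₂ h
    by_cases h₁ : P j₁ <;> by_cases h₂ : P j₂ <;> simp only [hχf, h₁, h₂, if_pos, if_neg,
      if_true, if_false] at h
    · exact φ.injective h
    · exact absurd (hP_next j₁ j₂ h h₁) h₂
    · exact absurd (hP_next j₂ j₁ h.symm h₂) h₁
    · exact Fin.castLE_injective hdn h
  have hχle : ∑ j, A (χf j) j ≤ ∑ j, A (Fin.castLE hdn j) j := by
    rw [hopt]; exact mpAux.sum_le_mpPerm A ⟨χf, hχinj⟩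
  have hpt : ∀ j, A (ψf j) j + A (χf j) j = A (Fin.castLE hdn j) j + A (φ j) j := by
    intro j
    by_cases h : P j <;> simp [hψf, hχf, h, add_comm]
  have hsum : ∑ j, A (ψf j) j + ∑ j, A (χf j) j
      = ∑ j, A (Fin.castLE hdn j) j + ∑ j, A (φ j) j := by
    rw [← Finset.sum_add_distrib, ← Finset.sum_add_distrib]
    exact Finset.sum_congr rfl fun j _ => hpt j
  refine ⟨⟨ψf, hψinj⟩, ?_, ?_, ?_, ?_⟩
  · intro j
    by_cases h : P j <;> simp [hψf, h]
  · simp only [Function.Embedding.coeFn_mk, hψf, if_pos hPc₁]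
    exact c₁.isLt
  · intro j hj hne
    simp only [Function.Embedding.coeFn_mk, hψf, if_neg (hP_bad j hj hne)]
  · simp only [Function.Embedding.coeFn_mk]
    linarith

/-- Any injection carrying `k₀` to a row `i ≥ d` can be improved to one whose other
columns all go to rows `< d`. -/
private lemma mpAux.exchange (hdn : d ≤ n) (A : Matrix (Fin n) (Fin d) ℝ)
    (hopt : ∑ j, A (Fin.castLE hdn j) j = mpPerm A)
    (i : Fin n) (hi : d ≤ (i : ℕ)) (k₀ : Fin d) :
    ∀ φ : Fin d ↪ Fin n, φ k₀ = i →
    ∃ ψ : Fin d ↪ Fin n, ψ k₀ = i ∧ (∀ j, j ≠ k₀ → ((ψ j : Fin n) : ℕ) < d) ∧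
      ∑ j, A (φ j) j ≤ ∑ j, A (ψ j) j := by
  classical
  suffices H : ∀ N : ℕ, ∀ φ : Fin d ↪ Fin n, φ k₀ = i →
      (Finset.univ.filter (fun j => d ≤ ((φ j : Fin n) : ℕ) ∧ j ≠ k₀)).card ≤ N →
      ∃ ψ : Fin d ↪ Fin n, ψ k₀ = i ∧ (∀ j, j ≠ k₀ → ((ψ j : Fin n) : ℕ) < d) ∧
        ∑ j, A (φ j) j ≤ ∑ j, A (ψ j) j by
    intro φ hk
    exact H _ φ hk le_rfl
  intro N
  induction N with
  | zero =>
    intro φ hk hcard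
    refine ⟨φ, hk, ?_, le_rfl⟩
    intro j hj
    by_contra hge
    have : j ∈ Finset.univ.filter (fun j => d ≤ ((φ j : Fin n) : ℕ) ∧ j ≠ k₀) := by
      simp [hj, Nat.le_of_not_lt hge]
    have := Finset.card_pos.2 ⟨j, this⟩
    omega
  | succ N ih =>
    intro φ hk hcard
    by_cases hemp : (Finset.univ.filter (fun j => d ≤ ((φ j : Fin n) : ℕ) ∧ j ≠ k₀)) = ∅
    · exact ih φ hk (by rw [hemp]; simp)
    · obtain ⟨c₁, hc₁⟩ := Finset.nonempty_iff_ne_empty.2 hemp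
      rw [Finset.mem_filter] at hc₁
      obtain ⟨-, hbc, hck⟩ := hc₁
      obtain ⟨ψ, hψor, hψc₁, hψfix, hψsum⟩ := mpAux.step hdn A hopt φ c₁ hbc
      have hψk : ψ k₀ = i := by
        have hne : φ k₀ ≠ φ c₁ := fun h => hck (φ.injective h).symm
        rw [hψfix k₀ (by rw [hk]; exact hi) hne, hk]
      have hsub : (Finset.univ.filter (fun j => d ≤ ((ψ j : Fin n) : ℕ) ∧ j ≠ k₀))
          ⊆ (Finset.univ.filter (fun j => d ≤ ((φ j : Fin n) : ℕ) ∧ j ≠ k₀)).erase c₁ := by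
        intro j hj
        rw [Finset.mem_filter] at hj
        obtain ⟨-, hdj, hjk⟩ := hj
        have hje : ψ j = φ j := by
          rcases hψor j with h | h
          · exact h
          · rw [h] at hdj; simp [Fin.coe_castLE] at hdj; omega
        refine Finset.mem_erase.2 ⟨?_, Finset.mem_filter.2 ⟨Finset.mem_univ _, by rw [← hje]; exact hdj, hjk⟩⟩
        intro h
        subst h
        omega
      have hcard' : (Finset.univ.filter (fun j => d ≤ ((ψ j : Fin n) : ℕ) ∧ j ≠ k₀)).card ≤ N := by
        have h1 := Finset.card_le_card hsub
        have h2 : ((Finset.univ.filter (fun j => d ≤ ((φ j : Fin n) : ℕ) ∧ j ≠ k₀)).erase c₁).card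
            = (Finset.univ.filter (fun j => d ≤ ((φ j : Fin n) : ℕ) ∧ j ≠ k₀)).card - 1 :=
          Finset.card_erase_of_mem (Finset.mem_filter.2 ⟨Finset.mem_univ _, hbc, hck⟩)
        omega
      obtain ⟨ψ', h1, h2, h3⟩ := ih ψ hψk hcard'
      exact ⟨ψ', h1, h2, hψsum.trans h3⟩

/-- The max-plus permanent of the top block equals that of the whole matrix when the
identity assignment is optimal. -/
private lemma mpAux.mpPerm_block (hdn : d ≤ n) (A : Matrix (Fin n) (Fin d) ℝ)
    (hopt : ∑ j, A (Fin.castLE hdn j) j = mpPerm A) :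
    mpPerm (A.submatrix (Fin.castLE hdn) (id : Fin d → Fin d)) = mpPerm A := by
  set M := A.submatrix (Fin.castLE hdn) (id : Fin d → Fin d) with hM
  apply le_antisymm
  · haveI : Nonempty (Fin d ↪ Fin d) := ⟨Function.Embedding.refl _⟩
    apply ciSup_le
    intro ξ
    have : ∑ j, M (ξ j) j = ∑ j, A ((ξ.trans (Fin.castLEEmb hdn)) j) j := by
      apply Finset.sum_congr rfl
      intro j _
      simp [hM, Matrix.submatrix_apply]
    rw [this]
    exact mpAux.sum_le_mpPerm A _
  · rw [← hopt]
    have : ∑ j, A (Fin.castLE hdn j) j = ∑ j, M ((Function.Embedding.refl (Fin d)) j) j := by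
      apply Finset.sum_congr rfl
      intro j _
      simp [hM, Matrix.submatrix_apply]
    rw [this]
    exact mpAux.sum_le_mpPerm M _

/-- Key identity: for a row `i` below the top block, the obligated permanent is given by
deleted permanents of the top block. -/
private lemma mpAux.mpPermOb_eq (hdn : d ≤ n) (A : Matrix (Fin n) (Fin d) ℝ)
    (hopt : ∑ j, A (Fin.castLE hdn j) j = mpPerm A)
    (hd : 0 < d) (i : Fin n) (hi : d ≤ (i : ℕ)) :
    mpPermOb A i = ⨆ j : Fin d, ⨆ k : Fin d,
      (A i k + mpPermDel (A.submatrix (Fin.castLE hdn) (id : Fin d → Fin d)) j k) := by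
  classical
  set M := A.submatrix (Fin.castLE hdn) (id : Fin d → Fin d) with hM
  set t : Fin d → Fin d → ℝ := fun j k => A i k + mpPermDel M j k with ht
  haveI : Nonempty (Fin d) := ⟨⟨0, hd⟩⟩
  have hle_T : ∀ j k, t j k ≤ ⨆ j : Fin d, ⨆ k : Fin d, t j k := by
    intro j k
    refine le_trans (le_ciSup (f := fun k => t j k)
      (Set.Finite.bddAbove (Set.finite_range _)) k) ?_
    exact le_ciSup (f := fun j => ⨆ k, t j k) (Set.Finite.bddAbove (Set.finite_range _)) j
  have hwit : ∃ φ : Fin d ↪ Fin n, φ ⟨0, hd⟩ = i := by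
    refine ⟨(Fin.castLEEmb hdn).trans (Equiv.swap (Fin.castLE hdn ⟨0, hd⟩) i).toEmbedding, ?_⟩
    simp [Equiv.swap_apply_left]
  apply le_antisymm
  · haveI : Nonempty {φ : Fin d ↪ Fin n // ∃ j, φ j = i} := ⟨⟨hwit.choose, ⟨_, hwit.choose_spec⟩⟩⟩
    apply ciSup_le
    rintro ⟨φ, k₀, hk₀⟩
    obtain ⟨ψ, hψk, hψlt, hψsum⟩ := mpAux.exchange hdn A hopt i hi k₀ φ hk₀
    refine hψsum.trans ?_
    set g : {c : Fin d // c ≠ k₀} → Fin d := fun c => ⟨((ψ c.1 : Fin n) : ℕ), hψlt c.1 c.2⟩ with hg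
    have hginj : Function.Injective g := by
      intro a b hab
      have hval : (g a : ℕ) = (g b : ℕ) := congrArg Fin.val hab
      have : ψ a.1 = ψ b.1 := Fin.ext hval
      exact Subtype.ext (ψ.injective this)
    have hnsurj : ¬ Function.Surjective g := by
      intro hs
      have h1 := Fintype.card_le_of_surjective g hs
      have h2 : Fintype.card {c : Fin d // c ≠ k₀} = d - 1 := by
        simp [Fintype.card_subtype_compl, Fintype.card_subtype_eq]
      rw [h2, Fintype.card_fin] at h1
      omega
    have hex : ∃ j0 : Fin d, ∀ c, g c ≠ j0 := by
      by_contra hcon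
      push_neg at hcon
      exact hnsurj hcon
    obtain ⟨j0, hj0⟩ := hex
    set ψ₁ : {c : Fin d // c ≠ k₀} → {r : Fin d // r ≠ j0} := fun c => ⟨g c, hj0 c⟩ with hψ₁
    have hψ₁inj : Function.Injective ψ₁ := by
      intro a b hab
      have h1 : (ψ₁ a).1 = (ψ₁ b).1 := congrArg Subtype.val hab
      exact hginj h1
    have hsplit : ∑ c, A (ψ c) c = A i k₀ + ∑ c : {c : Fin d // c ≠ k₀},
        (M.submatrix (fun r : {r : Fin d // r ≠ j0} => (r : Fin d))
          (fun c : {c : Fin d // c ≠ k₀} => (c : Fin d))) (ψ₁ c) c := by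
      rw [← Finset.add_sum_erase _ _ (Finset.mem_univ k₀), hψk]
      congr 1
      rw [Finset.sum_subtype (p := fun c : Fin d => c ≠ k₀) (Finset.univ.erase k₀)
        (fun x => by simp) (fun c => A (ψ c) c)]
      apply Finset.sum_congr rfl
      intro c _
      simp only [Matrix.submatrix_apply, hM, hψ₁, hg, id_eq]
      congr 1
    rw [hsplit]
    refine le_trans ?_ (hle_T j0 k₀)
    rw [ht]
    simp only
    gcongr
    exact mpAux.sum_le_mpPerm _ ⟨ψ₁, hψ₁inj⟩
  · apply ciSup_le
    intro j
    apply ciSup_le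
    intro k
    haveI hne2 : Nonempty ({c : Fin d // c ≠ k} ↪ {r : Fin d // r ≠ j}) := by
      refine ⟨⟨fun c => ⟨Equiv.swap k j c.1, ?_⟩, ?_⟩⟩
      · intro h
        have := (Equiv.swap k j).injective (h.trans (Equiv.swap_apply_left k j).symm)
        exact c.2 this
      · intro a b hab
        have h1 := congrArg Subtype.val hab
        simp only at h1
        exact Subtype.ext ((Equiv.swap k j).injective h1)
    obtain ⟨ψ₀, hψ₀⟩ := exists_eq_ciSup_of_finite
      (f := fun ψ : {c : Fin d // c ≠ k} ↪ {r : Fin d // r ≠ j} =>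
        ∑ c, (M.submatrix (fun r : {r : Fin d // r ≠ j} => (r : Fin d))
          (fun c : {c : Fin d // c ≠ k} => (c : Fin d))) (ψ c) c)
    set χf : Fin d → Fin n := fun c => if h : c = k then i else Fin.castLE hdn (ψ₀ ⟨c, h⟩) with hχ
    have hχinj : Function.Injective χf := by
      intro a b hab
      by_cases ha : a = k <;> by_cases hb : b = k <;>
        simp only [hχ, ha, hb, dif_pos, dif_neg, dite_true, dite_false] at hab
      · rw [ha, hb]
      · exfalso
        have : ((Fin.castLE hdn (ψ₀ ⟨b, hb⟩) : Fin n) : ℕ) < d := (ψ₀ ⟨b, hb⟩).1.isLt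
        rw [← hab] at this; omega
      · exfalso
        have : ((Fin.castLE hdn (ψ₀ ⟨a, ha⟩) : Fin n) : ℕ) < d := (ψ₀ ⟨a, ha⟩).1.isLt
        rw [hab] at this; omega
      · have h1 : (ψ₀ ⟨a, ha⟩ : Fin d) = (ψ₀ ⟨b, hb⟩ : Fin d) := Fin.castLE_injective hdn hab
        have h2 := ψ₀.injective (Subtype.ext h1)
        exact congrArg Subtype.val h2
    have hχk : χf k = i := by simp [hχ]
    have hsplit : ∑ c, A (χf c) c = A i k + ∑ c : {c : Fin d // c ≠ k},
        (M.submatrix (fun r : {r : Fin d // r ≠ j} => (r : Fin d))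
          (fun c : {c : Fin d // c ≠ k} => (c : Fin d))) (ψ₀ c) c := by
      rw [← Finset.add_sum_erase _ _ (Finset.mem_univ k), hχk]
      congr 1
      rw [Finset.sum_subtype (p := fun c : Fin d => c ≠ k) (Finset.univ.erase k)
        (fun x => by simp) (fun c => A (χf c) c)]
      apply Finset.sum_congr rfl
      intro c _
      simp [hχ, c.2, hM, Matrix.submatrix_apply]
    have : A i k + mpPermDel M j k = ∑ c, A (χf c) c := by
      rw [hsplit]
      congr 1
      rw [mpPermDel, mpPerm, ← hψ₀]
    rw [this]
    exact mpAux.sum_le_mpPermOb A i ⟨χf, hχinj⟩ ⟨k, hχk⟩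

end MpAux

/-- If the identity injection `j ↦ j` is an optimal assignment of an `n×d`
max-plus matrix `𝒜` (`n ≥ d`) and `ℳ` is the top `d×d` block, then the max-plus
statistical leverage scores satisfy `p_i(𝒜) = 0` for the first `d` rows and
`p_i(𝒜) = 2 max_{j,k} (𝒜_{ik} + (ℳ^{⊗-1})_{kj})` for the remaining rows. -/
theorem mpScore_formula (n d : ℕ) (hdn : d ≤ n) (A : Matrix (Fin n) (Fin d) ℝ)
    (hopt : Fin.castLEEmb hdn ∈ oas A) :
    ∀ i : Fin n,
      ((i : ℕ) < d → mpScore A i = 0) ∧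
      (d ≤ (i : ℕ) → mpScore A i =
        2 * (⨆ j : Fin d, ⨆ k : Fin d,
          (A i k + mpInv (A.submatrix (Fin.castLE hdn) (id : Fin d → Fin d)) k j))) := by
  classical
  have hopt' : ∑ j, A (Fin.castLE hdn j) j = mpPerm A := by
    have := hopt
    simp only [oas, Set.mem_setOf_eq] at this
    simpa using this
  intro i
  rcases Nat.eq_zero_or_pos d with hd0 | hd
  · subst hd0
    constructor
    · intro h; omega
    · intro _
      haveI : IsEmpty {φ : Fin 0 ↪ Fin n // ∃ j, φ j = i} :=
        ⟨by rintro ⟨φ, j, -⟩; exact j.elim0⟩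
      have h1 : mpPermOb A i = 0 := Real.iSup_of_isEmpty _
      have h2 : mpPerm A = 0 := by
        rw [← hopt']; simp
      have h3 : (⨆ j : Fin 0, ⨆ k : Fin 0,
          (A i k + mpInv (A.submatrix (Fin.castLE hdn) (id : Fin 0 → Fin 0)) k j)) = 0 :=
        Real.iSup_of_isEmpty _
      rw [mpScore, h1, h2, h3]
      ring
  · constructor
    · intro hid
      have hmem : (Fin.castLEEmb hdn) ⟨(i : ℕ), hid⟩ = i := by
        apply Fin.ext
        rfl
      have hOb : mpPermOb A i = mpPerm A := by
        apply le_antisymm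
        · haveI : Nonempty {φ : Fin d ↪ Fin n // ∃ j, φ j = i} :=
            ⟨⟨Fin.castLEEmb hdn, ⟨_, hmem⟩⟩⟩
          apply ciSup_le
          rintro ⟨φ, -⟩
          exact mpAux.sum_le_mpPerm A φ
        · rw [← hopt']
          have := mpAux.sum_le_mpPermOb A i (Fin.castLEEmb hdn) ⟨_, hmem⟩
          simpa using this
      rw [mpScore, hOb]
      ring
    · intro hdi
      set M := A.submatrix (Fin.castLE hdn) (id : Fin d → Fin d) with hM
      have hMA : mpPerm M = mpPerm A := mpAux.mpPerm_block hdn A hopt'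
      have hkey := mpAux.mpPermOb_eq hdn A hopt' hd i hdi
      haveI : Nonempty (Fin d) := ⟨⟨0, hd⟩⟩
      have hle_T : ∀ j k : Fin d, A i k + mpPermDel M j k ≤
          ⨆ j : Fin d, ⨆ k : Fin d, (A i k + mpPermDel M j k) := by
        intro j k
        refine le_trans (le_ciSup (f := fun k => A i k + mpPermDel M j k)
          (Set.Finite.bddAbove (Set.finite_range _)) k) ?_
        exact le_ciSup (f := fun j => ⨆ k, (A i k + mpPermDel M j k))
          (Set.Finite.bddAbove (Set.finite_range _)) j
      have hterm : ∀ j k : Fin d, A i k + mpInv M k j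
          = (A i k + mpPermDel M j k) - mpPerm A := by
        intro j k
        rw [mpInv, hMA]
        ring
      have hgoal : (⨆ j : Fin d, ⨆ k : Fin d, (A i k + mpInv M k j))
          = (⨆ j : Fin d, ⨆ k : Fin d, (A i k + mpPermDel M j k)) - mpPerm A := by
        apply le_antisymm
        · apply ciSup_le
          intro j
          apply ciSup_le
          intro k
          rw [hterm]
          exact sub_le_sub_right (hle_T j k) _
        · rw [sub_le_iff_le_add]
          apply ciSup_le
          intro j
          apply ciSup_le
          intro k
          have h1 : A i k + mpInv M k j ≤ ⨆ j : Fin d, ⨆ k : Fin d, (A i k + mpInv M k j) := by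
            refine le_trans (le_ciSup (f := fun k => A i k + mpInv M k j)
              (Set.Finite.bddAbove (Set.finite_range _)) k) ?_
            exact le_ciSup (f := fun j => ⨆ k, (A i k + mpInv M k j))
              (Set.Finite.bddAbove (Set.finite_range _)) j
          have h2 := hterm j k
          linarith
      rw [mpScore, hkey, ← hM, hgoal]
end

section
/- Every square real matrix admits a Hungarian scaling: for every M ∈ ℝ^{d×d} there exist a permutation π of {1,…,d} attaining perm(M) and vectors u, v ∈ ℝ^d such that M_{ij} + u_i + v_j ≤ 0 for all i,j ∈ {1,…,d}, with equality M_{π(j)j} + u_{π(j)} + v_j = 0 for all j ∈ {1,…,d}. -/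
open scoped BigOperators

namespace HungarianAux

variable {d : ℕ}

/-- Cost of a (reversed) walk: consecutive pair `(a, b)` contributes `c b a`,
i.e. the list records a walk ending at its head, read right-to-left. -/
noncomputable def wc (c : Fin d → Fin d → ℝ) : List (Fin d) → ℝ
  | [] => 0
  | [_] => 0
  | a :: b :: l => c b a + wc c (b :: l)

lemma wc_nil (c : Fin d → Fin d → ℝ) : wc c [] = 0 := rfl
lemma wc_single (c : Fin d → Fin d → ℝ) (a : Fin d) : wc c [a] = 0 := rfl
lemma wc_cons_cons (c : Fin d → Fin d → ℝ) (a b : Fin d) (l : List (Fin d)) :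
    wc c (a :: b :: l) = c b a + wc c (b :: l) := rfl

lemma wc_append (c : Fin d → Fin d → ℝ) (e : Fin d) (z : List (Fin d)) :
    ∀ x : List (Fin d), wc c (x ++ e :: z) = wc c (x ++ [e]) + wc c (e :: z)
  | [] => by simp [wc_single]
  | [a] => by simp [wc_cons_cons, wc_single]
  | a :: b :: x => by
    have h := wc_append c e z (b :: x)
    simp only [List.cons_append] at h ⊢
    rw [wc_cons_cons, wc_cons_cons, h]
    ring

lemma wc_eq_sum_of_chain (c : Fin d → Fin d → ℝ) (σ : Equiv.Perm (Fin d)) :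
    ∀ l : List (Fin d), List.Chain' (fun p q => σ p = q) l →
      wc c l = (l.dropLast.map (fun x => c (σ x) x)).sum
  | [], _ => by simp [wc_nil]
  | [a], _ => by simp [wc_single]
  | a :: b :: t, h => by
    rw [List.Chain', List.isChain_cons_cons] at h
    have ih := wc_eq_sum_of_chain c σ (b :: t) h.2
    rw [wc_cons_cons, ih]
    simp [← h.1]

lemma chain_formPerm (a : Fin d) (l : List (Fin d)) (h : (a :: l).Nodup) :
    List.Chain' (fun p q => (a :: l).formPerm p = q) ((a :: l) ++ [a]) := by
  rw [List.Chain', List.isChain_iff_getElem]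
  intro i hi
  simp only [List.length_append, List.length_cons, List.length_nil] at hi
  have him : i < (a :: l).length := by simp only [List.length_cons]; omega
  rw [List.getElem_append_left him]
  by_cases hlt : i + 1 < (a :: l).length
  · rw [List.getElem_append_left hlt]
    exact List.formPerm_apply_lt_getElem _ h i hlt
  · have hi1 : i = l.length := by
      simp only [List.length_cons] at hlt; omega
    subst hi1
    have h2 : ((a :: l) ++ [a])[l.length + 1]'(by simp) = a := by
      have := List.getElem_concat_length (l := a :: l) (a := a) (i := l.length + 1) (by simp) (by simp)
      simpa using this
    rw [h2]
    exact List.formPerm_apply_getElem_length a l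

lemma exists_dup_decomp {l : List (Fin d)} (h : ¬ l.Nodup) :
    ∃ (x : List (Fin d)) (e : Fin d) (y z : List (Fin d)), l = x ++ e :: (y ++ e :: z) := by
  rw [List.nodup_iff_sublist] at h
  push_neg at h
  obtain ⟨e, he⟩ := h
  obtain ⟨x, t, rfl, hex, ht⟩ := List.cons_sublist_iff.mp he
  obtain ⟨x1, x2, rfl⟩ := List.append_of_mem hex
  obtain ⟨y1, y2, rfl⟩ := List.append_of_mem (List.singleton_sublist.mp ht)
  exact ⟨x1, e, x2 ++ y1, y2, by simp⟩

section PotentialCore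

variable (c : Fin d → Fin d → ℝ) (hdiag : ∀ k, c k k = 0)
  (hcyc : ∀ ρ : Equiv.Perm (Fin d), 0 ≤ ∑ x, c (ρ x) x)

include hdiag hcyc in
/-- Any simple cycle has nonnegative cost. -/
lemma wc_cycle_nodup_nonneg (a : Fin d) (l : List (Fin d)) (h : (a :: l).Nodup) :
    0 ≤ wc c ((a :: l) ++ [a]) := by
  set σ := (a :: l).formPerm with hσ
  rw [wc_eq_sum_of_chain c σ _ (chain_formPerm a l h), List.dropLast_concat,
    ← List.sum_toFinset _ h]
  have hsub : (a :: l).toFinset ⊆ Finset.univ := Finset.subset_univ _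
  have : ∑ x ∈ (a :: l).toFinset, c (σ x) x = ∑ x, c (σ x) x := by
    refine Finset.sum_subset hsub fun x _ hx => ?_
    rw [hσ, List.formPerm_apply_of_notMem (by simpa using hx)]
    exact hdiag x
  rw [this]
  exact hcyc σ

include hdiag hcyc in
/-- Any closed walk has nonnegative cost. -/
lemma wc_closed_nonneg : ∀ n (l : List (Fin d)) (a : Fin d), l.length ≤ n →
    0 ≤ wc c ((a :: l) ++ [a])
  | 0, l, a, hl => by
    rw [List.length_eq_zero_iff.mp (Nat.le_zero.mp hl)]
    exact wc_cycle_nodup_nonneg c hdiag hcyc a [] (by simp)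
  | (n+1), l, a, hl => by
    by_cases h : (a :: l).Nodup
    · exact wc_cycle_nodup_nonneg c hdiag hcyc a l h
    · obtain ⟨x, e, y, z, hd⟩ := exists_dup_decomp h
      have hlen : x.length + y.length + z.length + 2 = l.length + 1 := by
        have := congrArg List.length hd
        simp only [List.length_cons, List.length_append] at this
        omega
      have e1 : wc c ((a :: l) ++ [a])
          = wc c (x ++ [e]) + wc c (e :: (y ++ e :: (z ++ [a]))) := by
        have hx : (a :: l) ++ [a] = x ++ e :: (y ++ e :: (z ++ [a])) := by
          rw [hd]; simp
        rw [hx, wc_append]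
      have e2 : wc c (e :: (y ++ e :: (z ++ [a])))
          = wc c ((e :: y) ++ [e]) + wc c (e :: (z ++ [a])) := by
        have hx : e :: (y ++ e :: (z ++ [a])) = (e :: y) ++ e :: (z ++ [a]) := by simp
        rw [hx, wc_append]
      have e3 : wc c (x ++ [e]) + wc c (e :: (z ++ [a])) = wc c (x ++ e :: (z ++ [a])) :=
        (wc_append c e (z ++ [a]) x).symm
      have hmid : 0 ≤ wc c ((e :: y) ++ [e]) := wc_closed_nonneg n y e (by omega)
      have hred : 0 ≤ wc c (x ++ e :: (z ++ [a])) := by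
        rcases x with _ | ⟨a', x'⟩
        · have hae : a = e := by
            have := congrArg List.head? hd
            simpa using this
          subst hae
          have hx : ([] : List (Fin d)) ++ a :: (z ++ [a]) = (a :: z) ++ [a] := by simp
          rw [hx]
          exact wc_closed_nonneg n z a (by omega)
        · have ha' : a' = a := by
            have := congrArg List.head? hd
            simpa using this.symm
          rw [ha']
          have hx : (a :: x') ++ e :: (z ++ [a]) = (a :: (x' ++ e :: z)) ++ [a] := by
            simp
          rw [hx]
          refine wc_closed_nonneg n (x' ++ e :: z) a ?_
          simp only [List.length_append, List.length_cons] at hlen ⊢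
          omega
      linarith

/-- Cost of each edge is at least `-C` where `C = ∑ |c p q|`. -/
lemma edge_lower (p q : Fin d) : -(∑ p', ∑ q', |c p' q'|) ≤ c p q := by
  have h1 : |c p q| ≤ ∑ p', ∑ q', |c p' q'| := by
    calc |c p q| ≤ ∑ q', |c p q'| :=
          Finset.single_le_sum (f := fun q' => |c p q'|)
            (fun i _ => abs_nonneg _) (Finset.mem_univ q)
      _ ≤ ∑ p', ∑ q', |c p' q'| :=
          Finset.single_le_sum (f := fun p' => ∑ q', |c p' q'|)
            (fun i _ => Finset.sum_nonneg fun _ _ => abs_nonneg _) (Finset.mem_univ p)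
  have h2 := neg_abs_le (c p q)
  linarith

lemma wc_ge_len : ∀ l : List (Fin d), -((l.length : ℝ) * ∑ p', ∑ q', |c p' q'|) ≤ wc c l
  | [] => by simp [wc_nil]
  | [a] => by
    have : (0:ℝ) ≤ ∑ p', ∑ q', |c p' q'| :=
      Finset.sum_nonneg fun _ _ => Finset.sum_nonneg fun _ _ => abs_nonneg _
    simp [wc_single]
    nlinarith
  | a :: b :: t => by
    have ih := wc_ge_len (b :: t)
    have he := edge_lower c b a
    rw [wc_cons_cons]
    simp only [List.length_cons] at ih ⊢
    have : (0:ℝ) ≤ ∑ p', ∑ q', |c p' q'| :=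
      Finset.sum_nonneg fun _ _ => Finset.sum_nonneg fun _ _ => abs_nonneg _
    push_cast at ih ⊢
    nlinarith

include hdiag hcyc in
/-- Every walk cost is bounded below, thanks to nonnegativity of cycles. -/
lemma wc_ge : ∀ n (l : List (Fin d)), l.length ≤ n →
    -((d : ℝ) * ∑ p', ∑ q', |c p' q'|) ≤ wc c l
  | 0, l, hl => by
    rw [List.length_eq_zero_iff.mp (Nat.le_zero.mp hl), wc_nil]
    have : (0:ℝ) ≤ ∑ p', ∑ q', |c p' q'| :=
      Finset.sum_nonneg fun _ _ => Finset.sum_nonneg fun _ _ => abs_nonneg _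
    nlinarith
  | (n+1), l, hl => by
    by_cases h : l.Nodup
    · have hlen : l.length ≤ d := by
        simpa using h.length_le_card
      have h1 := wc_ge_len c l
      have hC : (0:ℝ) ≤ ∑ p', ∑ q', |c p' q'| :=
        Finset.sum_nonneg fun _ _ => Finset.sum_nonneg fun _ _ => abs_nonneg _
      have : ((l.length : ℝ)) ≤ (d : ℝ) := by exact_mod_cast hlen
      nlinarith
    · obtain ⟨x, e, y, z, hd⟩ := exists_dup_decomp h
      have hlen : x.length + y.length + z.length + 2 = l.length := by
        have := congrArg List.length hd
        simp only [List.length_cons, List.length_append] at this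
        omega
      have e1 : wc c l = wc c (x ++ [e]) + wc c (e :: (y ++ e :: z)) := by
        rw [hd, wc_append]
      have e2 : wc c (e :: (y ++ e :: z)) = wc c ((e :: y) ++ [e]) + wc c (e :: z) := by
        have hx : e :: (y ++ e :: z) = (e :: y) ++ e :: z := by simp
        rw [hx, wc_append]
      have e3 : wc c (x ++ [e]) + wc c (e :: z) = wc c (x ++ e :: z) :=
        (wc_append c e z x).symm
      have hmid : 0 ≤ wc c ((e :: y) ++ [e]) :=
        wc_closed_nonneg c hdiag hcyc n y e (by omega)
      have hred := wc_ge n (x ++ e :: z) (by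
        simp only [List.length_append, List.length_cons]; omega)
      linarith

include hdiag hcyc in
/-- Existence of a potential for a cost matrix whose cycles are all nonnegative. -/
lemma exists_potential : ∃ v : Fin d → ℝ, ∀ j k, v j ≤ v k + c k j := by
  classical
  set B : ℝ := -((d : ℝ) * ∑ p', ∑ q', |c p' q'|) with hB
  have hwB : ∀ l : List (Fin d), B ≤ wc c l := fun l =>
    wc_ge c hdiag hcyc l.length l le_rfl
  set S : Fin d → Set ℝ := fun j => Set.range (fun l : List (Fin d) => wc c (j :: l)) with hS
  have hne : ∀ j, (S j).Nonempty := fun j => ⟨wc c [j], [], rfl⟩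
  have hbdd : ∀ j, BddBelow (S j) := fun j => ⟨B, by rintro t ⟨l, rfl⟩; exact hwB _⟩
  refine ⟨fun j => sInf (S j), fun j k => ?_⟩
  have h2 : sInf (S j) - c k j ≤ sInf (S k) := by
    refine le_csInf (hne k) ?_
    rintro t ⟨l, rfl⟩
    have hle : sInf (S j) ≤ wc c (j :: k :: l) := csInf_le (hbdd j) ⟨k :: l, rfl⟩
    rw [wc_cons_cons] at hle
    linarith
  linarith

end PotentialCore

end HungarianAux

/-- Every square real matrix admits a Hungarian scaling: there are a
permutation `π` attaining the max-plus permanent and vectors `u, v` with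
`M_{ij} + u_i + v_j ≤ 0` everywhere and equality along the optimal assignment. -/
theorem exists_hungarian_scaling (d : ℕ) (M : Matrix (Fin d) (Fin d) ℝ) :
    ∃ (π : Equiv.Perm (Fin d)) (u v : Fin d → ℝ),
      (∑ j, M (π j) j = mpPerm M) ∧
      (∀ i j, M i j + u i + v j ≤ 0) ∧
      (∀ j, M (π j) j + u (π j) + v j = 0) := by
  classical
  haveI : Nonempty (Fin d ↪ Fin d) := ⟨Function.Embedding.refl _⟩
  obtain ⟨φ, hφ⟩ := exists_eq_ciSup_of_finite (f := fun ψ : Fin d ↪ Fin d => ∑ j, M (ψ j) j)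
  have hbij : Function.Bijective φ := Finite.injective_iff_bijective.mp φ.injective
  set π : Equiv.Perm (Fin d) := Equiv.ofBijective φ hbij with hπdef
  have hπφ : ∀ j, π j = φ j := fun j => rfl
  have hopt : ∀ ψ : Fin d ↪ Fin d, ∑ j, M (ψ j) j ≤ mpPerm M := fun ψ =>
    le_ciSup (f := fun ψ : Fin d ↪ Fin d => ∑ j, M (ψ j) j)
      (Set.Finite.bddAbove (Set.finite_range _)) ψ
  have hπsum : ∑ j, M (π j) j = mpPerm M := by
    simp only [hπφ]
    exact hφ
  set c : Fin d → Fin d → ℝ := fun k j => M (π k) k - M (π k) j with hc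
  have hdiag : ∀ k, c k k = 0 := by intro k; simp [hc]
  have hcyc : ∀ ρ : Equiv.Perm (Fin d), 0 ≤ ∑ x, c (ρ x) x := by
    intro ρ
    have h1 : ∑ x, M (π (ρ x)) (ρ x) = ∑ x, M (π x) x :=
      Equiv.sum_comp ρ (fun x => M (π x) x)
    have h2 : ∑ x, M (π (ρ x)) x ≤ mpPerm M := by
      have := hopt ((ρ.toEmbedding).trans π.toEmbedding)
      simpa using this
    have h3 : ∑ x, c (ρ x) x = ∑ x, M (π (ρ x)) (ρ x) - ∑ x, M (π (ρ x)) x := by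
      simp [hc, Finset.sum_sub_distrib]
    rw [h3, h1, hπsum]
    linarith
  obtain ⟨v, hv⟩ := HungarianAux.exists_potential c hdiag hcyc
  refine ⟨π, fun i => -(M i (π.symm i)) - v (π.symm i), v, hπsum, ?_, ?_⟩
  · intro i j
    have h := hv j (π.symm i)
    have he : π (π.symm i) = i := π.apply_symm_apply i
    simp only [hc, he] at h
    dsimp only
    linarith
  · intro j
    have he : π.symm (π j) = j := π.symm_apply_apply j
    dsimp only
    rw [he]
    ring
end

section
/- Let H ∈ ℝ^{d×d} with d ≥ 2 satisfy H_{ij} ≤ 0 for all i,j and H_{ii} = 0 for all i. Then perm(H) = 0, and for all i,j ∈ {1,…,d} the entry of the max-plus inverse satisfies: (H^{⊗−1})_{ij} = perm(H with row j and column i deleted) = the maximum, over all sequences of distinct indices i = v_0, v_1, …, v_m = j in {1,…,d} (m ≥ 0, where for i = j only the trivial sequence is allowed and the empty sum is 0), of ∑_{t=0}^{m−1} H_{v_t v_{t+1}}; i.e. (H^{⊗−1})_{ij} equals the weight of the maximally weighted path from i to j in the weighted digraph on {1,…,d} whose edge i→j has weight H_{ij}. -/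
open scoped BigOperators

lemma aux_card_ne (d : ℕ) (i j : Fin d) :
    Fintype.card {c : Fin d // c ≠ i} = Fintype.card {r : Fin d // r ≠ j} := by
  simp [Fintype.card_subtype_compl]

lemma sum_le_path (d : ℕ) (H : Matrix (Fin d) (Fin d) ℝ)
    (hle : ∀ i j, H i j ≤ 0) (i j : Fin d)
    (φ : {c : Fin d // c ≠ i} ↪ {r : Fin d // r ≠ j}) :
    ∃ (m : ℕ) (v : Fin (m + 1) → Fin d), Function.Injective v ∧ v 0 = i ∧
      v (Fin.last m) = j ∧
      ∑ c : {c : Fin d // c ≠ i}, H (φ c) c ≤ ∑ t : Fin m, H (v t.castSucc) (v t.succ) := by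
  have hbij : Function.Bijective φ :=
    (Fintype.bijective_iff_injective_and_card φ).mpr ⟨φ.injective, aux_card_ne d i j⟩
  set e : {c : Fin d // c ≠ i} ≃ {r : Fin d // r ≠ j} := Equiv.ofBijective φ hbij with he
  set s : Fin d → Fin d := fun r => if h : r = j then j else (e.symm ⟨r, h⟩ : Fin d) with hs
  set u : ℕ → Fin d := fun n => s^[n] i with hu
  have hu0 : u 0 = i := rfl
  have husucc : ∀ n, u (n + 1) = s (u n) := fun n => Function.iterate_succ_apply' s n i
  -- fact A
  have factA : ∀ r (h : r ≠ j), s r ≠ i ∧ ∃ (h' : s r ≠ i), φ ⟨s r, h'⟩ = ⟨r, h⟩ := by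
    intro r h
    have hsr : s r = (e.symm ⟨r, h⟩ : Fin d) := dif_neg h
    have hne : s r ≠ i := by rw [hsr]; exact (e.symm ⟨r, h⟩).2
    refine ⟨hne, hne, ?_⟩
    have : (⟨s r, hne⟩ : {c : Fin d // c ≠ i}) = e.symm ⟨r, h⟩ := Subtype.ext hsr
    rw [this]
    exact e.apply_symm_apply ⟨r, h⟩
  -- injectivity of s off j
  have factB : ∀ r1 r2, r1 ≠ j → r2 ≠ j → s r1 = s r2 → r1 = r2 := by
    intro r1 r2 h1 h2 hss
    have e1 : s r1 = (e.symm ⟨r1, h1⟩ : Fin d) := dif_neg h1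
    have e2 : s r2 = (e.symm ⟨r2, h2⟩ : Fin d) := dif_neg h2
    have : e.symm ⟨r1, h1⟩ = e.symm ⟨r2, h2⟩ := Subtype.ext (by rw [← e1, ← e2, hss])
    have h3 := e.symm.injective this
    exact congrArg Subtype.val h3
  have key : ∀ b a, a < b → (∀ k < b, u k ≠ j) → u a ≠ u b := by
    intro b
    induction b using Nat.strong_induction_on with
    | _ b ih =>
      intro a hab hk heq
      obtain ⟨b', rfl⟩ : ∃ b', b = b' + 1 := ⟨b - 1, by omega⟩
      have hb'j : u b' ≠ j := hk b' (by omega)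
      cases a with
      | zero =>
        have : u (b' + 1) ≠ i := by
          rw [husucc]; exact (factA (u b') hb'j).1
        exact this (heq ▸ hu0 ▸ rfl)
      | succ a' =>
        have ha'j : u a' ≠ j := hk a' (by omega)
        have : u a' = u b' := by
          apply factB _ _ ha'j hb'j
          rw [← husucc, ← husucc]; exact heq
        exact ih b' (by omega) a' (by omega) (fun k hkb => hk k (by omega)) this
  have hex : ∃ n, u n = j := by
    by_contra hcon
    push_neg at hcon
    have hinj : Function.Injective (fun k : Fin (d + 1) => u k) := by
      intro a b hab
      rcases lt_trichotomy (a : ℕ) (b : ℕ) with h | h | h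
      · exact absurd hab (key b a h (fun k _ => hcon k))
      · exact Fin.ext h
      · exact absurd hab.symm (key a b h (fun k _ => hcon k))
    have := Fintype.card_le_of_injective _ hinj
    simp at this
  classical
  set N := Nat.find hex with hN
  have hNj : u N = j := Nat.find_spec hex
  have hNlt : ∀ k < N, u k ≠ j := fun k hk => Nat.find_min hex hk
  refine ⟨N, fun t => u t, ?_, hu0, ?_, ?_⟩
  · intro a b hab
    rcases lt_trichotomy (a : ℕ) (b : ℕ) with h | h | h
    · exact absurd hab (key b a h (fun k hk => hNlt k (by omega)))
    · exact Fin.ext h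
    · exact absurd hab.symm (key a b h (fun k hk => hNlt k (by omega)))
  · simpa using hNj
  · -- sum bound
    have htail : ∀ t : Fin N, u (t + 1) ≠ i := by
      intro t
      rw [husucc]
      exact (factA (u t) (hNlt t t.isLt)).1
    set g : Fin N → {c : Fin d // c ≠ i} := fun t => ⟨u (t + 1), htail t⟩ with hg
    have hginj : Function.Injective g := by
      intro a b hab
      have hab' : u (a + 1) = u (b + 1) := congrArg Subtype.val hab
      rcases lt_trichotomy (a : ℕ) (b : ℕ) with h | h | h
      · exact absurd hab' (key (b + 1) (a + 1) (by omega) (fun k hk => hNlt k (by omega)))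
      · exact Fin.ext h
      · exact absurd hab'.symm (key (a + 1) (b + 1) (by omega) (fun k hk => hNlt k (by omega)))
    set T : Finset {c : Fin d // c ≠ i} := Finset.image g Finset.univ with hT
    have step1 : ∑ c : {c : Fin d // c ≠ i}, H (φ c) c ≤ ∑ c ∈ T, H (φ c) c := by
      have hsd := Finset.sum_sdiff (f := fun c : {c : Fin d // c ≠ i} => H (φ c) c)
        (Finset.subset_univ T)
      have hnp : ∑ c ∈ Finset.univ \ T, H (φ c) c ≤ 0 :=
        Finset.sum_nonpos (fun c _ => hle _ _)
      linarith
    have step3 : ∀ t : Fin N, H (φ (g t)) (g t) = H (u t) (u (t + 1)) := by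
      intro t
      obtain ⟨_, h', hφ⟩ := factA (u t) (hNlt t t.isLt)
      have : g t = ⟨s (u t), h'⟩ := Subtype.ext (by simp [hg, husucc])
      rw [this, hφ]
      simp [hg, husucc]
    calc ∑ c : {c : Fin d // c ≠ i}, H (φ c) c ≤ ∑ c ∈ T, H (φ c) c := step1
      _ = ∑ t : Fin N, H (φ (g t)) (g t) := by
          rw [hT]; exact Finset.sum_image (fun a _ b _ h => hginj h)
      _ = ∑ t : Fin N, H (u t) (u (t + 1)) := Finset.sum_congr rfl (fun t _ => step3 t)
      _ = ∑ t : Fin N, H ((fun t : Fin (N+1) => u t) t.castSucc) ((fun t : Fin (N+1) => u t) t.succ) := by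
          apply Finset.sum_congr rfl
          intro t _
          simp [Fin.coe_castSucc, Fin.val_succ]

lemma path_le (d : ℕ) (H : Matrix (Fin d) (Fin d) ℝ) (hdiag : ∀ i, H i i = 0)
    (i j : Fin d) (m : ℕ) (v : Fin (m + 1) → Fin d) (hv : Function.Injective v)
    (h0 : v 0 = i) (hl : v (Fin.last m) = j) :
    ∃ φ : {c : Fin d // c ≠ i} ↪ {r : Fin d // r ≠ j},
      ∑ t : Fin m, H (v t.castSucc) (v t.succ) = ∑ c : {c : Fin d // c ≠ i}, H (φ c) c := by
  classical
  set ψ : Fin d → Fin d := fun c =>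
    if h : ∃ t : Fin m, v t.succ = c then v (Classical.choose h).castSucc else c with hψ
  have P1 : ∀ t : Fin m, ψ (v t.succ) = v t.castSucc := by
    intro t
    have hex : ∃ t' : Fin m, v t'.succ = v t.succ := ⟨t, rfl⟩
    have : Classical.choose hex = t := by
      have h1 := Classical.choose_spec hex
      have := hv h1
      exact Fin.succ_injective m this
    simp only [hψ, dif_pos hex, this]
  have P2 : ∀ c, (∀ t : Fin m, v t.succ ≠ c) → ψ c = c := by
    intro c hc
    have : ¬ ∃ t : Fin m, v t.succ = c := by push_neg; exact hc
    simp only [hψ, dif_neg this]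
  have himg : ∀ c : Fin d, c ≠ i → ψ c ≠ j := by
    intro c hci
    by_cases h : ∃ t : Fin m, v t.succ = c
    · have : ψ c = v (Classical.choose h).castSucc := by simp only [hψ, dif_pos h]
      rw [this, ← hl]
      intro heq
      exact (Fin.castSucc_lt_last (Classical.choose h)).ne (hv heq)
    · push_neg at h
      rw [P2 c h]
      cases m with
      | zero =>
        have : j = i := by rw [← hl, ← h0]; rfl
        rw [this]; exact hci
      | succ k =>
        have : Fin.last (k + 1) = (Fin.last k).succ := rfl
        intro heq
        exact h (Fin.last k) (by rw [← this, hl, heq])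
  have hψinj : ∀ c1 c2 : Fin d, c1 ≠ i → c2 ≠ i → ψ c1 = ψ c2 → c1 = c2 := by
    intro c1 c2 h1 h2 heq
    by_cases ha : ∃ t : Fin m, v t.succ = c1
    · have e1 : ψ c1 = v (Classical.choose ha).castSucc := by simp only [hψ, dif_pos ha]
      by_cases hb : ∃ t : Fin m, v t.succ = c2
      · have e2 : ψ c2 = v (Classical.choose hb).castSucc := by simp only [hψ, dif_pos hb]
        have : (Classical.choose ha).castSucc = (Classical.choose hb).castSucc :=
          hv (by rw [← e1, ← e2, heq])
        have hab : Classical.choose ha = Classical.choose hb := Fin.castSucc_inj.mp this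
        rw [← Classical.choose_spec ha, ← Classical.choose_spec hb, hab]
      · push_neg at hb
        rw [P2 c2 hb] at heq
        -- ψ c1 = v t.castSucc = c2, derive contradiction
        exfalso
        rw [e1] at heq
        set t' := Classical.choose ha
        by_cases ht0 : t'.castSucc = 0
        · exact h2 (by rw [← heq, ht0, h0])
        · obtain ⟨t'', ht''⟩ := Fin.exists_succ_eq.mpr ht0
          exact hb t'' (by rw [ht'', heq])
    · push_neg at ha
      rw [P2 c1 ha] at heq
      by_cases hb : ∃ t : Fin m, v t.succ = c2
      · have e2 : ψ c2 = v (Classical.choose hb).castSucc := by simp only [hψ, dif_pos hb]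
        exfalso
        rw [e2] at heq
        set t' := Classical.choose hb
        by_cases ht0 : t'.castSucc = 0
        · exact h1 (by rw [heq, ht0, h0])
        · obtain ⟨t'', ht''⟩ := Fin.exists_succ_eq.mpr ht0
          exact ha t'' (by rw [ht'', ← heq])
      · push_neg at hb
        rw [P2 c2 hb] at heq
        exact heq
  set φ : {c : Fin d // c ≠ i} ↪ {r : Fin d // r ≠ j} :=
    ⟨fun c => ⟨ψ c.1, himg c.1 c.2⟩,
     fun c1 c2 h => Subtype.ext (hψinj c1.1 c2.1 c1.2 c2.2 (congrArg Subtype.val h))⟩ with hφ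
  refine ⟨φ, ?_⟩
  have htail : ∀ t : Fin m, v t.succ ≠ i := by
    intro t heq
    rw [← h0] at heq
    exact (Fin.succ_ne_zero t) (hv heq)
  set g : Fin m → {c : Fin d // c ≠ i} := fun t => ⟨v t.succ, htail t⟩ with hg
  have hginj : Function.Injective g := by
    intro a b hab
    exact Fin.succ_injective m (hv (congrArg Subtype.val hab))
  set T : Finset {c : Fin d // c ≠ i} := Finset.image g Finset.univ with hT
  have hsub : ∑ c : {c : Fin d // c ≠ i}, H (φ c) c = ∑ c ∈ T, H (φ c) c := by
    refine (Finset.sum_subset (Finset.subset_univ T) ?_).symm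
    intro c _ hc
    have hnt : ∀ t : Fin m, v t.succ ≠ c.1 := by
      intro t heq
      exact hc (Finset.mem_image.mpr ⟨t, Finset.mem_univ t, Subtype.ext heq⟩)
    have : ψ c.1 = c.1 := P2 c.1 hnt
    show H (ψ c.1) c.1 = 0
    rw [this, hdiag]
  rw [hsub, hT, Finset.sum_image (fun a _ b _ h => hginj h)]
  apply Finset.sum_congr rfl
  intro t _
  show H (v t.castSucc) (v t.succ) = H (ψ (v t.succ)) (v t.succ)
  rw [P1 t]

/-- If `H` is a `d×d` real matrix (`d ≥ 2`) with `H_{ij} ≤ 0` and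
`H_{ii} = 0`, then `perm(H) = 0` and each entry `(H^{⊗-1})_{ij}` of the max-plus inverse
equals `perm(H with row j and column i deleted)`, which in turn equals the maximal
weight of a path from `i` to `j` through distinct vertices in the weighted digraph of
`H` (the trivial path of weight `0` when `i = j`). -/
theorem mpInv_eq_max_path_weight (d : ℕ) (hd : 2 ≤ d) (H : Matrix (Fin d) (Fin d) ℝ)
    (hle : ∀ i j, H i j ≤ 0) (hdiag : ∀ i, H i i = 0) :
    mpPerm H = 0 ∧
      ∀ i j : Fin d,
        mpInv H i j = mpPermDel H j i ∧
        mpInv H i j = sSup {w : ℝ | ∃ (m : ℕ) (v : Fin (m + 1) → Fin d),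
          Function.Injective v ∧ v 0 = i ∧ v (Fin.last m) = j ∧
          w = ∑ t : Fin m, H (v t.castSucc) (v t.succ)} := by
  classical
  have hperm : mpPerm H = 0 := by
    have hne : Nonempty (Fin d ↪ Fin d) := ⟨Function.Embedding.refl _⟩
    refine le_antisymm (ciSup_le fun φ => Finset.sum_nonpos fun c _ => hle _ _) ?_
    have h0 : ∑ c, H ((Function.Embedding.refl (Fin d)) c) c = 0 := by
      simp [hdiag]
    calc (0:ℝ) = ∑ c, H ((Function.Embedding.refl (Fin d)) c) c := h0.symm
      _ ≤ ⨆ φ : Fin d ↪ Fin d, ∑ c, H (φ c) c :=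
        le_ciSup (f := fun φ : Fin d ↪ Fin d => ∑ c, H (φ c) c)
          (Finite.bddAbove_range _) (Function.Embedding.refl _)
  refine ⟨hperm, fun i j => ?_⟩
  have h1 : mpInv H i j = mpPermDel H j i := by
    simp [mpInv, hperm]
  refine ⟨h1, ?_⟩
  rw [h1]
  set S := {w : ℝ | ∃ (m : ℕ) (v : Fin (m + 1) → Fin d),
    Function.Injective v ∧ v 0 = i ∧ v (Fin.last m) = j ∧
    w = ∑ t : Fin m, H (v t.castSucc) (v t.succ)} with hS
  have hSne : S.Nonempty := by
    by_cases hij : i = j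
    · refine ⟨0, 0, fun _ => i, fun a b _ => by have := a.isLt; have := b.isLt; exact Fin.ext (by omega), rfl, hij, by simp⟩
    · refine ⟨H i j, 1, ![i, j], ?_, rfl, rfl, by simp⟩
      intro a b hab
      fin_cases a <;> fin_cases b <;> simp_all
  have hSbdd : BddAbove S := by
    refine ⟨0, fun w hw => ?_⟩
    obtain ⟨m, v, _, _, _, rfl⟩ := hw
    exact Finset.sum_nonpos fun t _ => hle _ _
  have hEmb : Nonempty ({c : Fin d // c ≠ i} ↪ {r : Fin d // r ≠ j}) :=
    ⟨(Fintype.equivOfCardEq (aux_card_ne d i j)).toEmbedding⟩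
  show mpPermDel H j i = sSup S
  unfold mpPermDel mpPerm
  apply le_antisymm
  · refine ciSup_le fun φ => ?_
    obtain ⟨m, v, hvinj, hv0, hvl, hsum⟩ := sum_le_path d H hle i j φ
    refine le_trans ?_ (le_csSup hSbdd ⟨m, v, hvinj, hv0, hvl, rfl⟩)
    exact hsum
  · refine csSup_le hSne fun w hw => ?_
    obtain ⟨m, v, hvinj, hv0, hvl, rfl⟩ := hw
    obtain ⟨φ, hφ⟩ := path_le d H hdiag i j m v hvinj hv0 hvl
    rw [hφ]
    exact le_ciSup (f := fun ψ : {c : Fin d // c ≠ i} ↪ {r : Fin d // r ≠ j} =>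
      ∑ c : {c : Fin d // c ≠ i}, H.submatrix (fun r : {r : Fin d // r ≠ j} => (r : Fin d))
        (fun c : {c : Fin d // c ≠ i} => (c : Fin d)) (ψ c) c)
      (Finite.bddAbove_range _) φ
end
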